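/- arXiv:2011.01396 — 3 statements merged into one kernel-verified Lean document; each statement's English description precedes it below -/
import Mathlib

section
/- Let X, Y, Z be real Hilbert spaces and A : X → X', S : Y → Y', B₁ : X → Y', B : X → Z' bounded linear operators. Let V = ker B. Assume: (i) A is coercive on V with constant α > 0, i.e. A(τ)(τ) ≥ α‖τ‖² for all τ ∈ V; (ii) S(ψ)(ψ) ≥ 0 for all ψ ∈ Y; (iii) B₁ satisfies the inf-sup condition on V × Y with constant β₁ > 0; (iv) B satisfies the inf-sup condition on X × Z with constant β > 0. Then for each (F₁, F₂, G) ∈ X' × Y' × Z' there exists a unique (σ, φ, u) ∈ X × Y × Z such that A(σ) + B₁'(φ) + B'(u) = F₁ in X', B₁(σ) − S(φ) = F₂ in Y', and B(σ) = G in Z'. Moreover ‖(σ,φ,u)‖ ≤ C(‖F₁‖ + ‖F₂‖ + ‖G‖) with C depending only on α, β₁, β, ‖A‖, ‖S‖, ‖B₁‖. -/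
open InnerProductSpace ContinuousLinearMap RealInnerProductSpace

noncomputable section StmtAux
set_option maxHeartbeats 1000000
set_option linter.unusedSectionVars false
set_option linter.unusedVariables false

lemma keycoer {β x y : ℝ} (hβ : 0 < β) (hx : 0 ≤ x) (hy : 0 ≤ y) (h : β * y ≤ x) :
    β ^ 2 * y * y ≤ x * x := by
  have h2 := mul_self_le_mul_self (mul_nonneg hβ.le hy) h
  nlinarith [h2]

lemma keysq {β x y g : ℝ} (hβ : 0 < β) (hx : 0 ≤ x) (hy : 0 ≤ y) (hg : 0 ≤ g)
    (h1 : x * x ≤ g * y) (h2 : β * y ≤ x) : β * x ≤ g := by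
  rcases eq_or_lt_of_le hy with h0 | hy'
  · have hx0 : x = 0 := by nlinarith
    rw [hx0]; simpa using hg
  · have h4 : (β*y)*(β*y) ≤ g * y := (mul_self_le_mul_self (by positivity) h2).trans h1
    have hb2 : β^2*y ≤ g := by nlinarith
    have h7 : (β*x)*(β*x) ≤ g*g := by
      nlinarith [mul_le_mul_of_nonneg_left h1 (sq_nonneg β), mul_le_mul_of_nonneg_left hb2 hg]
    nlinarith [mul_nonneg (mul_nonneg hβ.le hx) hg]

lemma quadlem {α κ₁ κ₂ t D : ℝ} (hα : 0 < α) (ht : 0 ≤ t) (hD : 0 ≤ D)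
    (hκ₁ : 0 ≤ κ₁) (hκ₂ : 0 ≤ κ₂)
    (h : α * t^2 ≤ κ₁ * D * t + κ₂ * D^2) : t ≤ ((κ₁ + κ₂ + 1)/α + 1) * D := by
  obtain ⟨M, hM⟩ : ∃ M : ℝ, M = (κ₁ + κ₂ + 1)/α + 1 := ⟨_, rfl⟩
  rw [show (κ₁ + κ₂ + 1)/α + 1 = M from hM.symm]
  have heq : α * M = κ₁ + κ₂ + 1 + α := by
    rw [hM, mul_add, mul_one, mul_div_cancel₀ _ hα.ne']
  have hM1 : 1 ≤ M := by nlinarith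
  by_contra hcon
  push_neg at hcon
  have hMD : 0 ≤ M * D := by positivity
  have htpos : 0 < t := lt_of_le_of_lt hMD hcon
  nlinarith [mul_lt_mul_of_pos_left hcon (mul_pos hα htpos),
    mul_le_mul_of_nonneg_right (le_of_lt hcon) hD,
    mul_nonneg (mul_nonneg hκ₂ hD) hD, mul_nonneg ht hD,
    mul_le_mul_of_nonneg_right heq.ge (mul_nonneg ht hD)]

noncomputable def Cconst (α β₁ β a b : ℝ) : ℝ :=
  ((1 + a/β + (1+b/β)*(a/β₁) + (1+b/β)*((1+a/β)/β₁) + 1)/α + 1 + 1/β)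
  + ((1+a/β)/β₁ + (a/β₁)*((1 + a/β + (1+b/β)*(a/β₁) + (1+b/β)*((1+a/β)/β₁) + 1)/α + 1))
  + (1 + a*(((1 + a/β + (1+b/β)*(a/β₁) + (1+b/β)*((1+a/β)/β₁) + 1)/α + 1 + 1/β))
      + b*((1+a/β)/β₁ + (a/β₁)*((1 + a/β + (1+b/β)*(a/β₁) + (1+b/β)*((1+a/β)/β₁) + 1)/α + 1)))/β

lemma Cconst_pos {α β₁ β a b : ℝ} (hα : 0 < α) (hβ₁ : 0 < β₁) (hβ : 0 < β)
    (ha : 0 ≤ a) (hb : 0 ≤ b) : 0 < Cconst α β₁ β a b := by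
  unfold Cconst; positivity

lemma arith {α β₁ β a b f g h t sG p s q : ℝ}
    (hα : 0 < α) (hβ₁ : 0 < β₁) (hβ : 0 < β) (ha : 0 ≤ a) (hb : 0 ≤ b)
    (hf : 0 ≤ f) (hg : 0 ≤ g) (hh : 0 ≤ h)
    (ht : 0 ≤ t) (hsG : 0 ≤ sG) (hp : 0 ≤ p) (hs : 0 ≤ s) (hq : 0 ≤ q)
    (A1 : α*t^2 ≤ f*t + g*p + b*sG*p + a*sG*t)
    (A2 : β₁*p ≤ f + a*s) (A3 : β*q ≤ f + a*s + b*p) (A4 : β*sG ≤ h) (A5 : s ≤ t + sG) :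
    s + p + q ≤ Cconst α β₁ β a b * (f + g + h) := by
  obtain ⟨D, hD'⟩ : ∃ D : ℝ, D = f + g + h := ⟨_, rfl⟩
  have hD : 0 ≤ D := by rw [hD']; positivity
  have hfD : f ≤ D := by rw [hD']; linarith
  have hgD : g ≤ D := by rw [hD']; linarith
  have hhD : h ≤ D := by rw [hD']; linarith
  have hsG' : sG ≤ h/β := (le_div_iff₀ hβ).mpr (by linarith)
  obtain ⟨Kp1, hKp1⟩ : ∃ x : ℝ, x = (1+a/β)/β₁ := ⟨_, rfl⟩
  obtain ⟨Kp2, hKp2⟩ : ∃ x : ℝ, x = a/β₁ := ⟨_, rfl⟩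
  have hKp1n : 0 ≤ Kp1 := by rw [hKp1]; positivity
  have hKp2n : 0 ≤ Kp2 := by rw [hKp2]; positivity
  have hp' : p ≤ Kp1*D + Kp2*t := by
    have e : Kp1*D + Kp2*t = ((1+a/β)*D + a*t)/β₁ := by rw [hKp1, hKp2]; ring
    rw [e, le_div_iff₀ hβ₁]
    have h1 := mul_le_mul_of_nonneg_left A5 ha
    have h2 := mul_le_mul_of_nonneg_left hsG' ha
    have h3 := mul_le_mul_of_nonneg_left hhD (div_nonneg ha hβ.le)
    have h4 := mul_le_mul_of_nonneg_left hfD (div_nonneg ha hβ.le)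
    have h5 : a * (h/β) = a/β * h := by ring
    linarith [A2, hfD]
  obtain ⟨κ₁, hκ₁'⟩ : ∃ x : ℝ, x = 1 + a/β + (1+b/β)*Kp2 := ⟨_, rfl⟩
  obtain ⟨κ₂, hκ₂'⟩ : ∃ x : ℝ, x = (1+b/β)*Kp1 := ⟨_, rfl⟩
  have hκ₁n : 0 ≤ κ₁ := by rw [hκ₁']; positivity
  have hκ₂n : 0 ≤ κ₂ := by rw [hκ₂']; positivity
  have hgb : g + b*sG ≤ (1+b/β)*D := by
    have h2 := mul_le_mul_of_nonneg_left hsG' hb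
    have h3 := mul_le_mul_of_nonneg_left hhD (div_nonneg hb hβ.le)
    have h5 : b * (h/β) = b/β * h := by ring
    linarith
  have hgp : (g + b*sG)*p ≤ ((1+b/β)*D)*(Kp1*D + Kp2*t) :=
    mul_le_mul hgb hp' hp (by positivity)
  have hat : a*sG*t ≤ (a/β)*D*t := by
    have h2 := mul_le_mul_of_nonneg_left hsG' ha
    have h3 := mul_le_mul_of_nonneg_left hhD (div_nonneg ha hβ.le)
    have h5 : a * (h/β) = a/β * h := by ring
    have h6 : a*sG ≤ (a/β)*D := by linarith
    have h7 := mul_le_mul_of_nonneg_right h6 ht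
    linarith [h7]
  have hft : f*t ≤ D*t := mul_le_mul_of_nonneg_right hfD ht
  have hq2 : α*t^2 ≤ κ₁*D*t + κ₂*D^2 := by
    rw [hκ₁', hκ₂']
    linarith [A1, hgp, hat, hft]
  have htM := quadlem hα ht hD hκ₁n hκ₂n hq2
  obtain ⟨M, hM'⟩ : ∃ x : ℝ, x = (κ₁ + κ₂ + 1)/α + 1 := ⟨_, rfl⟩
  rw [← hM'] at htM
  have hM1 : 0 ≤ M := by rw [hM']; positivity
  have hsb : s ≤ (M + 1/β)*D := by
    have h2 : sG ≤ (1/β)*D := by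
      have h3 := mul_le_mul_of_nonneg_left hhD (by positivity : (0:ℝ) ≤ 1/β)
      have h5 : (1:ℝ)/β * h = h/β := by ring
      linarith [hsG']
    linarith [htM, A5]
  have hpb : p ≤ (Kp1 + Kp2*M)*D := by
    have := mul_le_mul_of_nonneg_left htM hKp2n
    linarith [hp']
  have hqb : q ≤ ((1 + a*(M + 1/β) + b*(Kp1 + Kp2*M))/β)*D := by
    rw [div_mul_eq_mul_div, le_div_iff₀ hβ]
    have h1 := mul_le_mul_of_nonneg_left hsb ha
    have h2 := mul_le_mul_of_nonneg_left hpb hb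
    linarith [A3, hfD, h1, h2]
  have hC : Cconst α β₁ β a b * (f+g+h)
      = ((M + 1/β) + (Kp1 + Kp2*M) + ((1 + a*(M + 1/β) + b*(Kp1 + Kp2*M))/β)) * D := by
    rw [hM', hκ₁', hκ₂', hKp1, hKp2, hD']; unfold Cconst; ring
  rw [hC]
  linarith [hsb, hpb, hqb]

variable {X Y Z : Type*} [NormedAddCommGroup X] [InnerProductSpace ℝ X] [CompleteSpace X]
  [NormedAddCommGroup Y] [InnerProductSpace ℝ Y] [CompleteSpace Y]
  [NormedAddCommGroup Z] [InnerProductSpace ℝ Z] [CompleteSpace Z]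

def rz {E : Type*} [NormedAddCommGroup E] [InnerProductSpace ℝ E] [CompleteSpace E] :
    (E →L[ℝ] ℝ) →L[ℝ] E :=
  LinearMap.mkContinuous
    { toFun := fun f => (InnerProductSpace.toDual ℝ E).symm f
      map_add' := by intro f g; simp
      map_smul' := by intro r f; simp [starRingEnd_apply] }
    1 (by intro f; simp)

lemma inner_rz {E : Type*} [NormedAddCommGroup E] [InnerProductSpace ℝ E] [CompleteSpace E]
    (f : E →L[ℝ] ℝ) (x : E) : ⟪rz f, x⟫_ℝ = f x := by
  simp [rz, LinearMap.mkContinuous]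

abbrev EE (X Y Z : Type*) [NormedAddCommGroup X] [InnerProductSpace ℝ X]
    [NormedAddCommGroup Y] [InnerProductSpace ℝ Y]
    [NormedAddCommGroup Z] [InnerProductSpace ℝ Z] : Type _ :=
  WithLp 2 (X × WithLp 2 (Y × Z))

def pk (x : X) (y : Y) (z : Z) : EE X Y Z :=
  (WithLp.equiv 2 _).symm (x, (WithLp.equiv 2 _).symm (y, z))

lemma pk_eta (p : EE X Y Z) : pk p.fst p.snd.fst p.snd.snd = p := rfl

lemma inner_pk (x : X) (y : Y) (z : Z) (q : EE X Y Z) :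
    ⟪pk x y z, q⟫_ℝ = ⟪x, q.fst⟫_ℝ + ⟪y, q.snd.fst⟫_ℝ + ⟪z, q.snd.snd⟫_ℝ := by
  simp [pk, WithLp.prod_inner_apply]; ring

lemma norm_pk_sq (x : X) (y : Y) (z : Z) :
    ‖pk x y z‖^2 = ‖x‖^2 + ‖y‖^2 + ‖z‖^2 := by
  simp [pk, WithLp.prod_norm_sq_eq_of_L2]; ring

def mkT (A : X →L[ℝ] X →L[ℝ] ℝ) (S : Y →L[ℝ] Y →L[ℝ] ℝ)
    (B₁ : X →L[ℝ] Y →L[ℝ] ℝ) (B : X →L[ℝ] Z →L[ℝ] ℝ) :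
    EE X Y Z →L[ℝ] EE X Y Z :=
  let ι : EE X Y Z ≃L[ℝ] X × (Y × Z) :=
    (WithLp.prodContinuousLinearEquiv 2 ℝ X (WithLp 2 (Y × Z))).trans
      ((ContinuousLinearEquiv.refl ℝ X).prodCongr (WithLp.prodContinuousLinearEquiv 2 ℝ Y Z))
  let pX : (X × (Y × Z)) →L[ℝ] X := ContinuousLinearMap.fst ℝ X (Y × Z)
  let pYZ := ContinuousLinearMap.snd ℝ X (Y × Z)
  let pY := (ContinuousLinearMap.fst ℝ Y Z).comp pYZ
  let pZ := (ContinuousLinearMap.snd ℝ Y Z).comp pYZ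
  let N : (X × (Y × Z)) →L[ℝ] X × (Y × Z) :=
    ((rz.comp A).comp pX + (rz.comp B₁.flip).comp pY + (rz.comp B.flip).comp pZ).prod
      (((rz.comp B₁).comp pX - (rz.comp S).comp pY).prod ((rz.comp B).comp pX))
  (ι.symm.toContinuousLinearMap.comp (N.comp ι.toContinuousLinearMap))

lemma inner_mkT (A : X →L[ℝ] X →L[ℝ] ℝ) (S : Y →L[ℝ] Y →L[ℝ] ℝ)
    (B₁ : X →L[ℝ] Y →L[ℝ] ℝ) (B : X →L[ℝ] Z →L[ℝ] ℝ) (p q : EE X Y Z) :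
    ⟪mkT A S B₁ B p, q⟫_ℝ =
      A p.fst q.fst + B₁ q.fst p.snd.fst + B q.fst p.snd.snd
      + B₁ p.fst q.snd.fst - S p.snd.fst q.snd.fst + B p.fst q.snd.snd := by
  simp [mkT, WithLp.prod_inner_apply, inner_add_left, inner_sub_left, inner_rz,
    ContinuousLinearEquiv.prodCongr_symm, ContinuousLinearEquiv.prodCongr_apply,
    WithLp.prodContinuousLinearEquiv_symm_apply, WithLp.prodContinuousLinearEquiv_apply]
  ring

lemma sq_le_imp {x y : ℝ} (hx : 0 ≤ x) (hy : 0 ≤ y) (h : x^2 ≤ y^2) : x ≤ y := by nlinarith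

lemma mkT_bound (A : X →L[ℝ] X →L[ℝ] ℝ) (S : Y →L[ℝ] Y →L[ℝ] ℝ)
    (B₁ : X →L[ℝ] Y →L[ℝ] ℝ) (B : X →L[ℝ] Z →L[ℝ] ℝ) (C : ℝ) (hC : 0 < C)
    (hap : ∀ (σ : X) (φ : Y) (u : Z) (F₁ : X →L[ℝ] ℝ) (F₂ : Y →L[ℝ] ℝ) (G : Z →L[ℝ] ℝ),
      (∀ τ : X, A σ τ + B₁ τ φ + B τ u = F₁ τ) →
      (∀ ψ : Y, B₁ σ ψ - S φ ψ = F₂ ψ) →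
      (∀ v : Z, B σ v = G v) →
      ‖σ‖ + ‖φ‖ + ‖u‖ ≤ C * (‖F₁‖ + ‖F₂‖ + ‖G‖)) :
    ∀ p : EE X Y Z, ‖p‖ ≤ (3*C) * ‖mkT A S B₁ B p‖ := by
  intro p
  set T := mkT A S B₁ B with hT
  set σ := p.fst with hσ
  set φ := p.snd.fst with hφ
  set u := p.snd.snd with hu
  set F₁ : X →L[ℝ] ℝ := A σ + B₁.flip φ + B.flip u with hF₁'
  set F₂ : Y →L[ℝ] ℝ := B₁ σ - S φ with hF₂'
  set G : Z →L[ℝ] ℝ := B σ with hG'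
  have e1 : ∀ τ, A σ τ + B₁ τ φ + B τ u = F₁ τ := by
    intro τ; simp [hF₁']
  have e2 : ∀ ψ, B₁ σ ψ - S φ ψ = F₂ ψ := by intro ψ; simp [hF₂']
  have e3 : ∀ v, B σ v = G v := fun v => rfl
  have hb := hap σ φ u F₁ F₂ G e1 e2 e3
  have normpk1 : ∀ x : X, ‖pk x (0:Y) (0:Z)‖ = ‖x‖ := by
    intro x
    have h2 := norm_pk_sq x (0:Y) (0:Z)
    simp only [norm_zero] at h2
    refine le_antisymm (sq_le_imp (norm_nonneg _) (norm_nonneg _) (by nlinarith))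
      (sq_le_imp (norm_nonneg _) (norm_nonneg _) (by nlinarith))
  have normpk2 : ∀ y : Y, ‖pk (0:X) y (0:Z)‖ = ‖y‖ := by
    intro y
    have h2 := norm_pk_sq (0:X) y (0:Z)
    simp only [norm_zero] at h2
    refine le_antisymm (sq_le_imp (norm_nonneg _) (norm_nonneg _) (by nlinarith))
      (sq_le_imp (norm_nonneg _) (norm_nonneg _) (by nlinarith))
  have normpk3 : ∀ z : Z, ‖pk (0:X) (0:Y) z‖ = ‖z‖ := by
    intro z
    have h2 := norm_pk_sq (0:X) (0:Y) z
    simp only [norm_zero] at h2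
    refine le_antisymm (sq_le_imp (norm_nonneg _) (norm_nonneg _) (by nlinarith))
      (sq_le_imp (norm_nonneg _) (norm_nonneg _) (by nlinarith))
  have hF1 : ‖F₁‖ ≤ ‖T p‖ := by
    refine opNorm_le_bound _ (norm_nonneg _) fun τ => ?_
    have hq : F₁ τ = ⟪T p, pk τ 0 0⟫_ℝ := by
      rw [hT, inner_mkT]
      simp [hF₁', pk, ← hσ, ← hφ, ← hu]
    rw [Real.norm_eq_abs, hq]
    have h3 := abs_real_inner_le_norm (T p) (pk τ (0:Y) (0:Z))
    rwa [normpk1 τ] at h3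
  have hF2 : ‖F₂‖ ≤ ‖T p‖ := by
    refine opNorm_le_bound _ (norm_nonneg _) fun ψ => ?_
    have hq : F₂ ψ = ⟪T p, pk 0 ψ 0⟫_ℝ := by
      rw [hT, inner_mkT]
      simp [hF₂', pk, ← hσ, ← hφ, ← hu]
    rw [Real.norm_eq_abs, hq]
    have h3 := abs_real_inner_le_norm (T p) (pk (0:X) ψ (0:Z))
    rwa [normpk2 ψ] at h3
  have hG : ‖G‖ ≤ ‖T p‖ := by
    refine opNorm_le_bound _ (norm_nonneg _) fun v => ?_
    have hq : G v = ⟪T p, pk 0 0 v⟫_ℝ := by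
      rw [hT, inner_mkT]
      simp [hG', pk, ← hσ, ← hφ, ← hu]
    rw [Real.norm_eq_abs, hq]
    have h3 := abs_real_inner_le_norm (T p) (pk (0:X) (0:Y) v)
    rwa [normpk3 v] at h3
  have hpn : ‖p‖ ≤ ‖σ‖ + ‖φ‖ + ‖u‖ := by
    have h2 := norm_pk_sq σ φ u
    rw [hσ, hφ, hu, pk_eta] at h2
    refine sq_le_imp (norm_nonneg _) (by positivity) ?_
    rw [h2]
    nlinarith [norm_nonneg σ, norm_nonneg φ, norm_nonneg u,
      mul_nonneg (norm_nonneg σ) (norm_nonneg φ), mul_nonneg (norm_nonneg σ) (norm_nonneg u),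
      mul_nonneg (norm_nonneg φ) (norm_nonneg u)]
  have : C * (‖F₁‖ + ‖F₂‖ + ‖G‖) ≤ C * (3 * ‖T p‖) :=
    mul_le_mul_of_nonneg_left (by linarith) hC.le
  linarith

lemma mkT_surj (A : X →L[ℝ] X →L[ℝ] ℝ) (S : Y →L[ℝ] Y →L[ℝ] ℝ)
    (B₁ : X →L[ℝ] Y →L[ℝ] ℝ) (B : X →L[ℝ] Z →L[ℝ] ℝ) (C C' : ℝ) (hC : 0 ≤ C)
    (hbound : ∀ p : EE X Y Z, ‖p‖ ≤ C * ‖mkT A S B₁ B p‖)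
    (hbound' : ∀ p : EE X Y Z, ‖p‖ ≤ C' * ‖mkT A.flip S.flip B₁ B p‖) :
    ∀ y : EE X Y Z, ∃ p, mkT A S B₁ B p = y := by
  set T := mkT A S B₁ B with hT
  have hanti : AntilipschitzWith (Real.toNNReal C) T :=
    ContinuousLinearMap.antilipschitz_of_bound T (fun p => by
      rw [Real.coe_toNNReal _ hC]; exact hbound p)
  have hclosed : IsClosed (Set.range T) := hanti.isClosed_range T.uniformContinuous
  have hcl2 : IsClosed ((LinearMap.range (T : EE X Y Z →ₗ[ℝ] EE X Y Z) : Submodule ℝ (EE X Y Z)) : Set (EE X Y Z)) := by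
    rw [LinearMap.coe_range]; exact hclosed
  haveI := hcl2.completeSpace_coe
  have htop : LinearMap.range (T : EE X Y Z →ₗ[ℝ] EE X Y Z) = ⊤ := by
    rw [← (LinearMap.range (T : EE X Y Z →ₗ[ℝ] EE X Y Z)).orthogonal_orthogonal, Submodule.eq_top_iff']
    intro v w hw
    have hw0 : ∀ p, ⟪T p, w⟫_ℝ = 0 := fun p =>
      (Submodule.mem_orthogonal _ w).mp hw (T p) (LinearMap.mem_range_self _ p)
    have hTw : mkT A.flip S.flip B₁ B w = 0 := by
      have hin : ∀ p : EE X Y Z, ⟪mkT A.flip S.flip B₁ B w, p⟫_ℝ = 0 := by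
        intro p
        rw [inner_mkT]
        have h2 := hw0 p
        rw [hT, inner_mkT] at h2
        simp only [ContinuousLinearMap.flip_apply]
        linarith
      have h3 := hin (mkT A.flip S.flip B₁ B w)
      rwa [inner_self_eq_zero] at h3
    have hwz : w = 0 := by
      have h4 := hbound' w
      rw [hTw] at h4
      simp only [norm_zero, mul_zero] at h4
      exact norm_le_zero_iff.mp h4
    rw [hwz]
    exact inner_zero_left v
  intro y
  exact LinearMap.range_eq_top.mp htop y

lemma existsSigmaG (B : X →L[ℝ] Z →L[ℝ] ℝ) (β : ℝ) (hβ : 0 < β)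
    (hB : ∀ v : Z, β * ‖v‖ ≤ ⨆ τ : {τ : X // τ ≠ 0}, B τ v / ‖(τ : X)‖) (G : Z →L[ℝ] ℝ) :
    ∃ τ : X, (∀ v, B τ v = G v) ∧ β * ‖τ‖ ≤ ‖G‖ := by
  set rB : Z →L[ℝ] X := rz.comp B.flip with hrBdef
  have hrB : ∀ (w : Z) (τ : X), ⟪rB w, τ⟫_ℝ = B τ w := by
    intro w τ; simp [hrBdef, inner_rz]
  have hlow : ∀ w : Z, β * ‖w‖ ≤ ‖rB w‖ := by
    intro w
    refine (hB w).trans (Real.iSup_le ?_ (norm_nonneg _))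
    rintro ⟨τ, hτ⟩
    rw [div_le_iff₀ (norm_pos_iff.mpr hτ)]
    calc B τ w = ⟪rB w, τ⟫_ℝ := (hrB w τ).symm
      _ ≤ ‖rB w‖ * ‖τ‖ := real_inner_le_norm _ _
  set c : Z →L[ℝ] Z →L[ℝ] ℝ := ((((innerSL ℝ).comp rB).flip).comp rB).flip with hcdef
  have hc : ∀ w₁ w₂ : Z, c w₁ w₂ = ⟪rB w₁, rB w₂⟫_ℝ := by
    intro w₁ w₂; simp [hcdef]
  have coercive : IsCoercive c := by
    refine ⟨β ^ 2, by positivity, fun w => ?_⟩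
    rw [hc, real_inner_self_eq_norm_mul_norm]
    exact keycoer hβ (norm_nonneg _) (norm_nonneg _) (hlow w)
  set L := coercive.continuousLinearEquivOfBilin with hLdef
  set w := L.symm (rz G) with hwdef
  have hLw : L w = rz G := L.apply_symm_apply _
  have hw : ∀ v, c w v = G v := by
    intro v
    have h2 := coercive.continuousLinearEquivOfBilin_apply w v
    rw [← hLdef, hLw, inner_rz] at h2
    linarith
  refine ⟨rB w, fun v => ?_, ?_⟩
  · calc B (rB w) v = ⟪rB v, rB w⟫_ℝ := (hrB v (rB w)).symm
      _ = ⟪rB w, rB v⟫_ℝ := real_inner_comm _ _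
      _ = c w v := (hc w v).symm
      _ = G v := hw v
  · have h1 : ‖rB w‖ * ‖rB w‖ = c w w := by
      rw [hc, real_inner_self_eq_norm_mul_norm]
    have h2 : c w w ≤ ‖G‖ * ‖w‖ := by
      rw [hw w]
      exact (le_abs_self _).trans (by simpa using G.le_opNorm w)
    exact keysq hβ (norm_nonneg _) (norm_nonneg _) (norm_nonneg _) (h1.le.trans h2) (hlow w)

lemma apriori (A : X →L[ℝ] X →L[ℝ] ℝ) (S : Y →L[ℝ] Y →L[ℝ] ℝ)
    (B₁ : X →L[ℝ] Y →L[ℝ] ℝ) (B : X →L[ℝ] Z →L[ℝ] ℝ)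
    (α β₁ β : ℝ) (hα : 0 < α) (hβ₁ : 0 < β₁) (hβ : 0 < β)
    (hAcoer : ∀ τ : X, (∀ v : Z, B τ v = 0) → α * ‖τ‖ ^ 2 ≤ A τ τ)
    (hS : ∀ ψ : Y, 0 ≤ S ψ ψ)
    (hB₁ : ∀ ψ : Y,
      β₁ * ‖ψ‖ ≤ ⨆ τ : {τ : X // (∀ v : Z, B τ v = 0) ∧ τ ≠ 0}, B₁ τ ψ / ‖(τ : X)‖)
    (hB : ∀ v : Z, β * ‖v‖ ≤ ⨆ τ : {τ : X // τ ≠ 0}, B τ v / ‖(τ : X)‖) :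
    ∀ (σ : X) (φ : Y) (u : Z) (F₁ : X →L[ℝ] ℝ) (F₂ : Y →L[ℝ] ℝ) (G : Z →L[ℝ] ℝ),
      (∀ τ : X, A σ τ + B₁ τ φ + B τ u = F₁ τ) →
      (∀ ψ : Y, B₁ σ ψ - S φ ψ = F₂ ψ) →
      (∀ v : Z, B σ v = G v) →
      ‖σ‖ + ‖φ‖ + ‖u‖ ≤ Cconst α β₁ β ‖A‖ ‖B₁‖ * (‖F₁‖ + ‖F₂‖ + ‖G‖) := by
  intro σ φ u F₁ F₂ G e1 e2 e3
  obtain ⟨σG, hσG, hσGn⟩ := existsSigmaG B β hβ hB G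
  have hV : ∀ v, B (σ - σG) v = 0 := by
    intro v
    simp [map_sub, ContinuousLinearMap.sub_apply, e3 v, hσG v]
  -- energy estimate
  have hcoer := hAcoer (σ - σG) hV
  have he1 := e1 (σ - σG)
  have hBu : B (σ - σG) u = 0 := hV u
  have he2 := e2 φ
  have hA1 : A (σ - σG) (σ - σG) = A σ (σ - σG) - A σG (σ - σG) := by
    simp [map_sub, ContinuousLinearMap.sub_apply]; ring
  have hB1 : B₁ (σ - σG) φ = B₁ σ φ - B₁ σG φ := by
    simp [map_sub, ContinuousLinearMap.sub_apply]
  have hSφ := hS φ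
  have bF1 : F₁ (σ - σG) ≤ ‖F₁‖ * ‖σ - σG‖ :=
    (le_abs_self _).trans (by simpa using F₁.le_opNorm (σ - σG))
  have bF2 : -F₂ φ ≤ ‖F₂‖ * ‖φ‖ :=
    (neg_le_abs _).trans (by simpa using F₂.le_opNorm φ)
  have bB1 : B₁ σG φ ≤ ‖B₁‖ * ‖σG‖ * ‖φ‖ :=
    (le_abs_self _).trans (by simpa using B₁.le_opNorm₂ σG φ)
  have bA : -A σG (σ - σG) ≤ ‖A‖ * ‖σG‖ * ‖σ - σG‖ :=
    (neg_le_abs _).trans (by simpa using A.le_opNorm₂ σG (σ - σG))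
  have A1 : α * ‖σ - σG‖^2 ≤ ‖F₁‖ * ‖σ - σG‖ + ‖F₂‖ * ‖φ‖
      + ‖B₁‖ * ‖σG‖ * ‖φ‖ + ‖A‖ * ‖σG‖ * ‖σ - σG‖ := by
    linarith
  -- φ bound
  have A2 : β₁ * ‖φ‖ ≤ ‖F₁‖ + ‖A‖ * ‖σ‖ := by
    refine (hB₁ φ).trans (Real.iSup_le ?_ (by positivity))
    rintro ⟨τ, hτV, hτ0⟩
    rw [div_le_iff₀ (norm_pos_iff.mpr hτ0)]
    have hBτu : B τ u = 0 := hτV u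
    have he := e1 τ
    have hb1 : B₁ τ φ = F₁ τ - A σ τ := by linarith
    rw [hb1]
    have b1 : F₁ τ ≤ ‖F₁‖ * ‖τ‖ := (le_abs_self _).trans (by simpa using F₁.le_opNorm τ)
    have b2 : -A σ τ ≤ ‖A‖ * ‖σ‖ * ‖τ‖ :=
      (neg_le_abs _).trans (by simpa using A.le_opNorm₂ σ τ)
    nlinarith [norm_nonneg τ]
  -- u bound
  have A3 : β * ‖u‖ ≤ ‖F₁‖ + ‖A‖ * ‖σ‖ + ‖B₁‖ * ‖φ‖ := by
    refine (hB u).trans (Real.iSup_le ?_ (by positivity))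
    rintro ⟨τ, hτ0⟩
    rw [div_le_iff₀ (norm_pos_iff.mpr hτ0)]
    have he := e1 τ
    have hb1 : B τ u = F₁ τ - A σ τ - B₁ τ φ := by linarith
    rw [hb1]
    have b1 : F₁ τ ≤ ‖F₁‖ * ‖τ‖ := (le_abs_self _).trans (by simpa using F₁.le_opNorm τ)
    have b2 : -A σ τ ≤ ‖A‖ * ‖σ‖ * ‖τ‖ :=
      (neg_le_abs _).trans (by simpa using A.le_opNorm₂ σ τ)
    have b3 : -B₁ τ φ ≤ ‖B₁‖ * ‖φ‖ * ‖τ‖ := by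
      have := (neg_le_abs _).trans (by simpa using B₁.le_opNorm₂ τ φ)
      nlinarith [norm_nonneg τ, norm_nonneg φ, norm_nonneg B₁]
    nlinarith [norm_nonneg τ]
  have A5 : ‖σ‖ ≤ ‖σ - σG‖ + ‖σG‖ := by
    have := norm_add_le (σ - σG) σG
    simpa using this
  exact arith hα hβ₁ hβ (norm_nonneg A) (norm_nonneg B₁) (norm_nonneg F₁) (norm_nonneg F₂)
    (norm_nonneg G) (norm_nonneg _) (norm_nonneg σG) (norm_nonneg φ) (norm_nonneg σ)
    (norm_nonneg u) A1 A2 A3 hσGn A5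

end StmtAux

theorem stmt_6 {X Y Z : Type*}
    [NormedAddCommGroup X] [InnerProductSpace ℝ X] [CompleteSpace X]
    [NormedAddCommGroup Y] [InnerProductSpace ℝ Y] [CompleteSpace Y]
    [NormedAddCommGroup Z] [InnerProductSpace ℝ Z] [CompleteSpace Z]
    (A : X →L[ℝ] X →L[ℝ] ℝ) (S : Y →L[ℝ] Y →L[ℝ] ℝ)
    (B₁ : X →L[ℝ] Y →L[ℝ] ℝ) (B : X →L[ℝ] Z →L[ℝ] ℝ)
    (α β₁ β : ℝ) (hα : 0 < α) (hβ₁ : 0 < β₁) (hβ : 0 < β)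
    -- (i) coercivity of A on the kernel V of B
    (hAcoer : ∀ τ : X, (∀ v : Z, B τ v = 0) → α * ‖τ‖ ^ 2 ≤ A τ τ)
    -- (ii) S positive semidefinite
    (hS : ∀ ψ : Y, 0 ≤ S ψ ψ)
    -- (iii) inf-sup for B₁ on V × Y
    (hB₁ : ∀ ψ : Y,
      β₁ * ‖ψ‖ ≤ ⨆ τ : {τ : X // (∀ v : Z, B τ v = 0) ∧ τ ≠ 0}, B₁ τ ψ / ‖(τ : X)‖)
    -- (iv) inf-sup for B on X × Z
    (hB : ∀ v : Z, β * ‖v‖ ≤ ⨆ τ : {τ : X // τ ≠ 0}, B τ v / ‖(τ : X)‖) :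
    ∃ C > 0, ∀ (F₁ : X →L[ℝ] ℝ) (F₂ : Y →L[ℝ] ℝ) (G : Z →L[ℝ] ℝ),
      (∃! p : X × Y × Z,
        (∀ τ : X, A p.1 τ + B₁ τ p.2.1 + B τ p.2.2 = F₁ τ) ∧
        (∀ ψ : Y, B₁ p.1 ψ - S p.2.1 ψ = F₂ ψ) ∧
        (∀ v : Z, B p.1 v = G v)) ∧
      (∀ σ : X, ∀ φ : Y, ∀ u : Z,
        ((∀ τ : X, A σ τ + B₁ τ φ + B τ u = F₁ τ) ∧
         (∀ ψ : Y, B₁ σ ψ - S φ ψ = F₂ ψ) ∧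
         (∀ v : Z, B σ v = G v)) →
        ‖σ‖ + ‖φ‖ + ‖u‖ ≤ C * (‖F₁‖ + ‖F₂‖ + ‖G‖)) := by
  have hC : 0 < Cconst α β₁ β ‖A‖ ‖B₁‖ :=
    Cconst_pos hα hβ₁ hβ (norm_nonneg A) (norm_nonneg B₁)
  have hap := apriori A S B₁ B α β₁ β hα hβ₁ hβ hAcoer hS hB₁ hB
  have hAcoer' : ∀ τ : X, (∀ v : Z, B τ v = 0) → α * ‖τ‖ ^ 2 ≤ A.flip τ τ := by
    intro τ hv; simpa using hAcoer τ hv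
  have hS' : ∀ ψ : Y, 0 ≤ S.flip ψ ψ := by intro ψ; simpa using hS ψ
  have hap' := apriori A.flip S.flip B₁ B α β₁ β hα hβ₁ hβ hAcoer' hS' hB₁ hB
  have hC' : 0 < Cconst α β₁ β ‖A.flip‖ ‖B₁‖ :=
    Cconst_pos hα hβ₁ hβ A.flip.opNorm_nonneg B₁.opNorm_nonneg
  have hb := mkT_bound A S B₁ B _ hC hap
  have hb' := mkT_bound A.flip S.flip B₁ B _ hC' hap'
  have hsurj := mkT_surj A S B₁ B _ _ (by positivity) hb hb'
  refine ⟨Cconst α β₁ β ‖A‖ ‖B₁‖, hC, fun F₁ F₂ G => ⟨?_,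
    fun σ φ u hh => hap σ φ u F₁ F₂ G hh.1 hh.2.1 hh.2.2⟩⟩
  obtain ⟨p, hp⟩ := hsurj (pk (rz F₁) (rz F₂) (rz G))
  have key : ∀ q : EE X Y Z, ⟪(mkT A S B₁ B) p, q⟫_ℝ = ⟪pk (rz F₁) (rz F₂) (rz G), q⟫_ℝ := by
    intro q; rw [hp]
  have e1 : ∀ τ : X, A p.fst τ + B₁ τ p.snd.fst + B τ p.snd.snd = F₁ τ := by
    intro τ
    have h2 := key (pk τ 0 0)
    rw [inner_mkT, inner_pk] at h2
    simpa [pk, inner_rz] using h2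
  have e2 : ∀ ψ : Y, B₁ p.fst ψ - S p.snd.fst ψ = F₂ ψ := by
    intro ψ
    have h2 := key (pk 0 ψ 0)
    rw [inner_mkT, inner_pk] at h2
    simpa [pk, inner_rz] using h2
  have e3 : ∀ v : Z, B p.fst v = G v := by
    intro v
    have h2 := key (pk 0 0 v)
    rw [inner_mkT, inner_pk] at h2
    simpa [pk, inner_rz] using h2
  refine ⟨(p.fst, p.snd.fst, p.snd.snd), ⟨e1, e2, e3⟩, ?_⟩
  rintro ⟨σ', φ', u'⟩ ⟨f1, f2, f3⟩
  have d1 : ∀ τ : X, A (σ' - p.fst) τ + B₁ τ (φ' - p.snd.fst) + B τ (u' - p.snd.snd)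
      = (0 : X →L[ℝ] ℝ) τ := by
    intro τ
    have h1 := f1 τ
    have h2 := e1 τ
    simp only [map_sub, ContinuousLinearMap.sub_apply, ContinuousLinearMap.zero_apply] at *
    linarith
  have d2 : ∀ ψ : Y, B₁ (σ' - p.fst) ψ - S (φ' - p.snd.fst) ψ = (0 : Y →L[ℝ] ℝ) ψ := by
    intro ψ
    have h1 := f2 ψ
    have h2 := e2 ψ
    simp only [map_sub, ContinuousLinearMap.sub_apply, ContinuousLinearMap.zero_apply] at *
    linarith
  have d3 : ∀ v : Z, B (σ' - p.fst) v = (0 : Z →L[ℝ] ℝ) v := by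
    intro v
    have h1 := f3 v
    have h2 := e3 v
    simp only [map_sub, ContinuousLinearMap.sub_apply, ContinuousLinearMap.zero_apply] at *
    linarith
  have hz := hap _ _ _ 0 0 0 d1 d2 d3
  simp only [norm_zero, add_zero, mul_zero] at hz
  have n1 : σ' - p.fst = 0 := by
    rw [← norm_eq_zero]
    have := norm_nonneg (φ' - p.snd.fst); have := norm_nonneg (u' - p.snd.snd)
    have := norm_nonneg (σ' - p.fst); linarith
  have n2 : φ' - p.snd.fst = 0 := by
    rw [← norm_eq_zero]
    have := norm_nonneg (φ' - p.snd.fst); have := norm_nonneg (u' - p.snd.snd)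
    have := norm_nonneg (σ' - p.fst); linarith
  have n3 : u' - p.snd.snd = 0 := by
    rw [← norm_eq_zero]
    have := norm_nonneg (φ' - p.snd.fst); have := norm_nonneg (u' - p.snd.snd)
    have := norm_nonneg (σ' - p.fst); linarith
  have g1 := sub_eq_zero.mp n1
  have g2 := sub_eq_zero.mp n2
  have g3 := sub_eq_zero.mp n3
  simp [Prod.ext_iff, g1, g2, g3]
end

section
/- Let T be a simplex in ℝⁿ (n = 2 or 3) with vertices r₁,…,r_s (s = n+1) and let Q(φ,ψ) = (|T|/s) Σᵢ φ(rᵢ)·ψ(rᵢ) be the vertex quadrature rule. Then Q is an inner product on the space of vector-valued (or matrix-valued) polynomials of degree ≤ 1 on T, and the induced norm is equivalent to the L²(T) norm with equivalence constants independent of the diameter of T under shape regularity; in particular there exist C₀, C₁ > 0 with C₀‖φ‖²_{L²(T)} ≤ Q(φ,φ) ≤ C₁‖φ‖²_{L²(T)} for all φ linear on T. -/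
open MeasureTheory RealInnerProductSpace BigOperators

/-- Vertex quadrature rule on the simplex with vertices `r`, applied to two
affine (degree ≤ 1 polynomial) fields `φ`, `ψ`. -/
noncomputable def vertexQuad {n : ℕ} {F : Type*}
    [NormedAddCommGroup F] [InnerProductSpace ℝ F]
    (r : Fin (n + 1) → EuclideanSpace ℝ (Fin n))
    (φ ψ : EuclideanSpace ℝ (Fin n) →ᵃ[ℝ] F) : ℝ :=
  ((volume (convexHull ℝ (Set.range r))).toReal / (n + 1)) * ∑ i, ⟪φ (r i), ψ (r i)⟫

section Aux
open Metric Set Finset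

variable {n : ℕ} {F : Type*} [NormedAddCommGroup F] [InnerProductSpace ℝ F]

local notation "E" => EuclideanSpace ℝ (Fin n)

lemma aux_affine_continuous (φ : E →ᵃ[ℝ] F) : Continuous φ :=
  AffineMap.continuous_linear_iff.mp φ.linear.continuous_of_finiteDimensional

lemma aux_integrableOn_ball {f : EuclideanSpace ℝ (Fin n) → ℝ} (hf : Continuous f)
    (z : E) (rad : ℝ) : IntegrableOn f (Metric.ball z rad) :=
  ((hf.continuousOn).integrableOn_compact (isCompact_closedBall z rad)).mono_set
    Metric.ball_subset_closedBall

lemma aux_reflect_integral (R : EuclideanSpace ℝ (Fin n) ≃ₗᵢ[ℝ] EuclideanSpace ℝ (Fin n))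
    (z : E) (rad : ℝ) (f : EuclideanSpace ℝ (Fin n) → ℝ) :
    ∫ x in Metric.ball z rad, f (z + R (x - z)) = ∫ x in Metric.ball z rad, f x := by
  have hMP : MeasurePreserving (fun x : E => z + R (x - z)) volume volume := by
    have h1 : MeasurePreserving (fun x : E => x - z) volume volume :=
      measurePreserving_sub_right volume z
    have h2 : MeasurePreserving (fun x : E => z + x) volume volume :=
      measurePreserving_add_left volume z
    exact h2.comp (R.measurePreserving.comp h1)
  have hemb : MeasurableEmbedding (fun x : E => z + R (x - z)) := by
    have e1 : MeasurableEmbedding (fun x : E => x - z) :=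
      (Homeomorph.subRight z).measurableEmbedding
    have e2 : MeasurableEmbedding (R : E → E) := R.toHomeomorph.measurableEmbedding
    have e3 : MeasurableEmbedding (fun x : E => z + x) :=
      (Homeomorph.addLeft z).measurableEmbedding
    exact (e3.comp e2).comp e1
  have hpre : (fun x : E => z + R (x - z)) ⁻¹' (Metric.ball z rad) = Metric.ball z rad := by
    ext x
    simp only [Set.mem_preimage, Metric.mem_ball, dist_eq_norm, add_sub_cancel_left,
      LinearIsometryEquiv.norm_map]
  calc ∫ x in Metric.ball z rad, f (z + R (x - z))
      = ∫ x in (fun x : E => z + R (x - z)) ⁻¹' (Metric.ball z rad), f (z + R (x - z)) := by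
        rw [hpre]
    _ = ∫ x in Metric.ball z rad, f x := hMP.setIntegral_preimage_emb hemb f _

lemma aux_center_bound (φ : EuclideanSpace ℝ (Fin n) →ᵃ[ℝ] F) (z : E) (rad : ℝ) :
    (volume (Metric.ball z rad)).toReal * ‖φ z‖ ^ 2 ≤ ∫ x in Metric.ball z rad, ‖φ x‖ ^ 2 := by
  set R : EuclideanSpace ℝ (Fin n) ≃ₗᵢ[ℝ] EuclideanSpace ℝ (Fin n) := .neg ℝ with hRdef
  have hφc : Continuous fun x : E => ‖φ x‖ ^ 2 := ((aux_affine_continuous φ).norm).pow 2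
  have hτc : Continuous fun x : E => z + R (x - z) :=
    continuous_const.add (R.continuous.comp (continuous_id.sub continuous_const))
  have hfi : IntegrableOn (fun x : E => ‖φ x‖ ^ 2) (Metric.ball z rad) :=
    aux_integrableOn_ball hφc z rad
  have hfiτ : IntegrableOn (fun x : E => ‖φ (z + R (x - z))‖ ^ 2) (Metric.ball z rad) :=
    aux_integrableOn_ball (hφc.comp hτc) z rad
  have key : ∀ x : E, ‖φ z‖ ^ 2 ≤ (‖φ x‖ ^ 2 + ‖φ (z + R (x - z))‖ ^ 2) / 2 := by
    intro x
    have ha : φ x = φ.linear (x - z) + φ z := by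
      have h := φ.map_vadd z (x - z)
      simpa [vadd_eq_add, sub_add_cancel] using h
    have hb : φ (z + R (x - z)) = -φ.linear (x - z) + φ z := by
      have h1 : z + R (x - z) = -(x - z) + z := by
        simp [hRdef]
        abel
      rw [h1, ← vadd_eq_add, φ.map_vadd, map_neg]
      simp [vadd_eq_add]
    rw [ha, hb]
    have hx : ‖φ.linear (x - z) + φ z‖ ^ 2 + ‖-φ.linear (x - z) + φ z‖ ^ 2
        = 2 * ‖φ z‖ ^ 2 + 2 * ‖φ.linear (x - z)‖ ^ 2 := by
      rw [norm_add_sq_real, norm_add_sq_real, norm_neg, inner_neg_left]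
      ring
    nlinarith [sq_nonneg ‖φ.linear (x - z)‖]
  have h1 : ∫ x in Metric.ball z rad, ‖φ (z + R (x - z))‖ ^ 2
      = ∫ x in Metric.ball z rad, ‖φ x‖ ^ 2 :=
    aux_reflect_integral R z rad (fun y => ‖φ y‖ ^ 2)
  calc (volume (Metric.ball z rad)).toReal * ‖φ z‖ ^ 2
      = ∫ _x in Metric.ball z rad, ‖φ z‖ ^ 2 := by rw [setIntegral_const, smul_eq_mul]; rfl
    _ ≤ ∫ x in Metric.ball z rad, (‖φ x‖ ^ 2 + ‖φ (z + R (x - z))‖ ^ 2) / 2 := by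
        refine setIntegral_mono_on ?_ ((hfi.add hfiτ).div_const 2) measurableSet_ball
          (fun x _ => key x)
        exact integrableOn_const measure_ball_lt_top.ne
    _ = ((∫ x in Metric.ball z rad, ‖φ x‖ ^ 2)
          + ∫ x in Metric.ball z rad, ‖φ (z + R (x - z))‖ ^ 2) / 2 := by
        rw [integral_div, integral_add hfi hfiτ]
    _ = ∫ x in Metric.ball z rad, ‖φ x‖ ^ 2 := by rw [h1]; ring

lemma aux_dir_bound (φ : EuclideanSpace ℝ (Fin n) →ᵃ[ℝ] F) (z : E) {rad : ℝ} (hrad : 0 < rad)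
    {u : EuclideanSpace ℝ (Fin n)} (hu : ‖u‖ = 1) :
    25 / 64 * rad ^ 2 * (volume (Metric.ball (0 : EuclideanSpace ℝ (Fin n)) (rad / 8))).toReal
        * ‖φ.linear u‖ ^ 2
      ≤ ∫ x in Metric.ball z rad, ‖φ x‖ ^ 2 := by
  set K : Submodule ℝ (EuclideanSpace ℝ (Fin n)) := (ℝ ∙ u)ᗮ with hK
  set R : EuclideanSpace ℝ (Fin n) ≃ₗᵢ[ℝ] EuclideanSpace ℝ (Fin n) := Submodule.reflection K with hRdef
  have hRv : ∀ v : E, R v = v - (2 * ⟪u, v⟫) • u := by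
    intro v
    have h0 : R v = -(Submodule.reflection (ℝ ∙ u) v) := Submodule.reflection_orthogonal_apply (K := ℝ ∙ u) v
    have h1 : Submodule.reflection (ℝ ∙ u) v = 2 • (⟪u, v⟫ / ((‖u‖ : ℝ) ^ 2)) • u - v :=
      Submodule.reflection_singleton_apply u v
    rw [h0, h1, hu]
    push_cast
    rw [one_pow, div_one, two_nsmul, two_mul, add_smul]
    abel
  have hτφ : ∀ x : E, φ (z + R (x - z)) = φ x - (2 * ⟪u, x - z⟫) • φ.linear u := by
    intro x
    have h1 : z + R (x - z) = -((2 * ⟪u, x - z⟫) • u) + x := by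
      rw [hRv]
      abel
    rw [h1, ← vadd_eq_add, φ.map_vadd, map_neg, LinearMap.map_smul]
    simp [vadd_eq_add, sub_eq_neg_add]
  have hφc : Continuous fun x : E => ‖φ x‖ ^ 2 := ((aux_affine_continuous φ).norm).pow 2
  have hτc : Continuous fun x : E => z + R (x - z) :=
    continuous_const.add (R.continuous.comp (continuous_id.sub continuous_const))
  have hgc : Continuous fun x : E => ⟪u, x - z⟫ ^ 2 * ‖φ.linear u‖ ^ 2 :=
    (((continuous_const.inner (continuous_id.sub continuous_const)).pow 2)).mul continuous_const
  have hfi : IntegrableOn (fun x : E => ‖φ x‖ ^ 2) (Metric.ball z rad) :=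
    aux_integrableOn_ball hφc z rad
  have hfiτ : IntegrableOn (fun x : E => ‖φ (z + R (x - z))‖ ^ 2) (Metric.ball z rad) :=
    aux_integrableOn_ball (hφc.comp hτc) z rad
  have hgi : IntegrableOn (fun x : E => ⟪u, x - z⟫ ^ 2 * ‖φ.linear u‖ ^ 2) (Metric.ball z rad) :=
    aux_integrableOn_ball hgc z rad
  have key : ∀ x : E,
      ⟪u, x - z⟫ ^ 2 * ‖φ.linear u‖ ^ 2 ≤ (‖φ x‖ ^ 2 + ‖φ (z + R (x - z))‖ ^ 2) / 2 := by
    intro x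
    set t : ℝ := ⟪u, x - z⟫ with ht
    set b : F := t • φ.linear u with hbdef
    set a : F := φ x - b with hadef
    have hxa : φ x = a + b := by rw [hadef]; abel
    have hxb : φ (z + R (x - z)) = a - b := by
      rw [hτφ, hadef, hbdef, two_mul, add_smul]
      abel
    have hnb : ‖b‖ ^ 2 = t ^ 2 * ‖φ.linear u‖ ^ 2 := by
      rw [hbdef, norm_smul]
      rw [mul_pow, Real.norm_eq_abs, sq_abs]
    have hx : ∀ p q : F, ‖p + q‖ ^ 2 + ‖p - q‖ ^ 2 = 2 * ‖p‖ ^ 2 + 2 * ‖q‖ ^ 2 := fun p q => by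
      rw [norm_add_sq_real, norm_sub_sq_real]; ring
    rw [hxa, hxb]
    nlinarith [sq_nonneg ‖a‖, hx a b, hnb]
  set c : E := z + (3 * rad / 4) • u with hc
  have hsub : Metric.ball c (rad / 8) ⊆ Metric.ball z rad := by
    intro x hx
    rw [Metric.mem_ball] at hx ⊢
    have hdcz : dist c z = 3 * rad / 4 := by
      rw [hc, dist_eq_norm, add_sub_cancel_left, norm_smul, hu, Real.norm_eq_abs,
        abs_of_nonneg (by linarith : (0:ℝ) ≤ 3 * rad / 4), mul_one]
    calc dist x z ≤ dist x c + dist c z := dist_triangle x c z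
      _ < rad / 8 + 3 * rad / 4 := by rw [hdcz]; linarith
      _ ≤ rad := by linarith
  have hlow : ∀ x ∈ Metric.ball c (rad / 8),
      25 / 64 * rad ^ 2 * ‖φ.linear u‖ ^ 2 ≤ ⟪u, x - z⟫ ^ 2 * ‖φ.linear u‖ ^ 2 := by
    intro x hx
    rw [Metric.mem_ball, dist_eq_norm] at hx
    have hinner : ⟪u, x - z⟫ = ⟪u, x - c⟫ + 3 * rad / 4 := by
      have hxz : x - z = (x - c) + (3 * rad / 4) • u := by rw [hc]; abel
      rw [hxz, inner_add_right, real_inner_smul_right, real_inner_self_eq_norm_sq, hu]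
      ring
    have habs : |⟪u, x - c⟫| ≤ ‖x - c‖ := by
      calc |⟪u, x - c⟫| ≤ ‖u‖ * ‖x - c‖ := abs_real_inner_le_norm u (x - c)
        _ = ‖x - c‖ := by rw [hu, one_mul]
    have h5 : 5 / 8 * rad ≤ ⟪u, x - z⟫ := by
      have := abs_le.mp habs
      rw [hinner]
      linarith [this.1]
    have hsq : (5 / 8 * rad) ^ 2 ≤ ⟪u, x - z⟫ ^ 2 := by
      have h0 : (0:ℝ) ≤ 5 / 8 * rad := by linarith
      exact pow_le_pow_left₀ h0 h5 2
    have : 25 / 64 * rad ^ 2 = (5 / 8 * rad) ^ 2 := by ring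
    rw [this]
    exact mul_le_mul_of_nonneg_right hsq (sq_nonneg _)
  have hvolc : volume (Metric.ball c (rad / 8)) = volume (Metric.ball (0 : E) (rad / 8)) :=
    Measure.addHaar_ball_center volume c (rad / 8)
  have h1 : ∫ x in Metric.ball z rad, ‖φ (z + R (x - z))‖ ^ 2
      = ∫ x in Metric.ball z rad, ‖φ x‖ ^ 2 :=
    aux_reflect_integral R z rad (fun y => ‖φ y‖ ^ 2)
  calc 25 / 64 * rad ^ 2 * (volume (Metric.ball (0 : E) (rad / 8))).toReal * ‖φ.linear u‖ ^ 2
      = (volume (Metric.ball c (rad / 8))).toReal * (25 / 64 * rad ^ 2 * ‖φ.linear u‖ ^ 2) := by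
        rw [hvolc]; ring
    _ = ∫ _x in Metric.ball c (rad / 8), 25 / 64 * rad ^ 2 * ‖φ.linear u‖ ^ 2 := by
        rw [setIntegral_const, smul_eq_mul]; rfl
    _ ≤ ∫ x in Metric.ball c (rad / 8), ⟪u, x - z⟫ ^ 2 * ‖φ.linear u‖ ^ 2 := by
        refine setIntegral_mono_on ?_ (hgi.mono_set hsub) measurableSet_ball hlow
        exact integrableOn_const measure_ball_lt_top.ne
    _ ≤ ∫ x in Metric.ball z rad, ⟪u, x - z⟫ ^ 2 * ‖φ.linear u‖ ^ 2 := by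
        refine setIntegral_mono_set hgi ?_ hsub.eventuallyLE
        exact Filter.Eventually.of_forall fun x => by positivity
    _ ≤ ∫ x in Metric.ball z rad, (‖φ x‖ ^ 2 + ‖φ (z + R (x - z))‖ ^ 2) / 2 := by
        exact setIntegral_mono_on hgi ((hfi.add hfiτ).div_const 2) measurableSet_ball
          (fun x _ => key x)
    _ = ((∫ x in Metric.ball z rad, ‖φ x‖ ^ 2)
          + ∫ x in Metric.ball z rad, ‖φ (z + R (x - z))‖ ^ 2) / 2 := by
        rw [integral_div, integral_add hfi hfiτ]
    _ = ∫ x in Metric.ball z rad, ‖φ x‖ ^ 2 := by rw [h1]; ring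

lemma aux_comb_repr (φ : EuclideanSpace ℝ (Fin n) →ᵃ[ℝ] F) {s : Set (EuclideanSpace ℝ (Fin n))}
    {x : EuclideanSpace ℝ (Fin n)} (hx : x ∈ convexHull ℝ s) :
    ∃ (ι : Type) (t : Finset ι) (w : ι → ℝ) (ζ : ι → EuclideanSpace ℝ (Fin n)),
      (∀ i ∈ t, 0 ≤ w i) ∧ ∑ i ∈ t, w i = 1 ∧ (∀ i ∈ t, ζ i ∈ s) ∧
      φ x = ∑ i ∈ t, w i • φ (ζ i) := by
  rw [_root_.convexHull_eq] at hx
  obtain ⟨ι, t, w, ζ, hw0, hw1, hζ, hxx⟩ := hx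
  refine ⟨ι, t, w, ζ, hw0, hw1, hζ, ?_⟩
  rw [← hxx, ← affineCombination_eq_centerMass hw1, Finset.map_affineCombination t ζ w hw1 φ,
    affineCombination_eq_centerMass hw1, Finset.centerMass_eq_of_sum_1 _ _ hw1]
  rfl

end Aux

set_option maxHeartbeats 2000000 in
theorem stmt_16 (n : ℕ) (hn : n = 2 ∨ n = 3)
    {F : Type*} [NormedAddCommGroup F] [InnerProductSpace ℝ F] :
    -- the vertex quadrature rule is an inner product on affine fields
    (∀ r : Fin (n + 1) → EuclideanSpace ℝ (Fin n), AffineIndependent ℝ r →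
      (∀ φ ψ : EuclideanSpace ℝ (Fin n) →ᵃ[ℝ] F, vertexQuad r φ ψ = vertexQuad r ψ φ) ∧
      (∀ φ φ' ψ : EuclideanSpace ℝ (Fin n) →ᵃ[ℝ] F,
        vertexQuad r (φ + φ') ψ = vertexQuad r φ ψ + vertexQuad r φ' ψ) ∧
      (∀ (c : ℝ) (φ ψ : EuclideanSpace ℝ (Fin n) →ᵃ[ℝ] F),
        vertexQuad r (c • φ) ψ = c * vertexQuad r φ ψ) ∧
      (∀ φ : EuclideanSpace ℝ (Fin n) →ᵃ[ℝ] F, 0 ≤ vertexQuad r φ φ) ∧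
      (∀ φ : EuclideanSpace ℝ (Fin n) →ᵃ[ℝ] F, vertexQuad r φ φ = 0 →
        ∀ x ∈ convexHull ℝ (Set.range r), φ x = 0)) ∧
    -- norm equivalence, uniform over shape-regular simplices
    (∀ ρ : ℝ, 0 < ρ → ∃ C₀ > (0:ℝ), ∃ C₁ > (0:ℝ),
      ∀ r : Fin (n + 1) → EuclideanSpace ℝ (Fin n), AffineIndependent ℝ r →
        ∀ (z : EuclideanSpace ℝ (Fin n)) (ρin : ℝ), 0 < ρin →
          Metric.ball z ρin ⊆ convexHull ℝ (Set.range r) →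
          Metric.diam (convexHull ℝ (Set.range r)) ≤ ρ * ρin →
          ∀ φ : EuclideanSpace ℝ (Fin n) →ᵃ[ℝ] F,
            C₀ * (∫ x in convexHull ℝ (Set.range r), ‖φ x‖ ^ 2) ≤ vertexQuad r φ φ ∧
            vertexQuad r φ φ ≤ C₁ * ∫ x in convexHull ℝ (Set.range r), ‖φ x‖ ^ 2) := by
  classical
  constructor
  · -- Part 1: inner product structure
    intro r hr
    set T := convexHull ℝ (Set.range r) with hT
    have hTc : IsCompact T := (Set.finite_range r).isCompact_convexHull ℝ
    have hspan : affineSpan ℝ (Set.range r) = ⊤ :=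
      hr.affineSpan_eq_top_iff_card_eq_finrank_add_one.mpr
        (by simp [finrank_euclideanSpace_fin])
    have hint : (interior T).Nonempty :=
      interior_convexHull_nonempty_iff_affineSpan_eq_top.mpr hspan
    have hpos : 0 < volume T := Measure.measure_pos_of_nonempty_interior _ hint
    have hfin : volume T < ⊤ := hTc.measure_lt_top
    have hvT : 0 < (volume T).toReal := ENNReal.toReal_pos hpos.ne' hfin.ne
    refine ⟨fun φ ψ => ?_, fun φ φ' ψ => ?_, fun c φ ψ => ?_, fun φ => ?_, fun φ hq x hx => ?_⟩
    · unfold vertexQuad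
      congr 1
      exact Finset.sum_congr rfl fun i _ => real_inner_comm _ _
    · unfold vertexQuad
      simp only [AffineMap.coe_add, Pi.add_apply, inner_add_left, Finset.sum_add_distrib]
      ring
    · unfold vertexQuad
      simp only [AffineMap.coe_smul, Pi.smul_apply, real_inner_smul_left, ← Finset.mul_sum]
      ring
    · unfold vertexQuad
      exact mul_nonneg (by positivity)
        (Finset.sum_nonneg fun i _ => real_inner_self_nonneg)
    · have hfac : (volume T).toReal / ((n : ℝ) + 1) ≠ 0 := by positivity
      unfold vertexQuad at hq
      rw [← hT] at hq
      have hsum : ∑ i, ⟪φ (r i), φ (r i)⟫ = 0 := by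
        rcases mul_eq_zero.mp hq with h | h
        · exact absurd h hfac
        · exact h
      have hzero : ∀ j, φ (r j) = 0 := by
        intro j
        have h0 := (Finset.sum_eq_zero_iff_of_nonneg
          (fun i _ => real_inner_self_nonneg)).mp hsum j (Finset.mem_univ j)
        exact inner_self_eq_zero.mp h0
      obtain ⟨ι, t, w, ζ, hw0, hw1, hζ, hφx⟩ := aux_comb_repr φ hx
      rw [hφx]
      refine Finset.sum_eq_zero fun i hi => ?_
      obtain ⟨j, hj⟩ := hζ i hi
      rw [← hj, hzero j, smul_zero]
  · -- Part 2: norm equivalence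
    intro ρ hρ
    refine ⟨1 / ((n : ℝ) + 1), by positivity,
      ρ ^ n * (2 + 128 / 25 * 8 ^ n * ρ ^ 2), by positivity, ?_⟩
    intro r hr z ρin hρin hball hdiam φ
    set T := convexHull ℝ (Set.range r) with hT
    have hTc : IsCompact T := (Set.finite_range r).isCompact_convexHull ℝ
    have hTm : MeasurableSet T := hTc.isClosed.measurableSet
    have hTb : Bornology.IsBounded T := hTc.isBounded
    have hz : z ∈ T := hball (Metric.mem_ball_self hρin)
    have hφc : Continuous fun x : EuclideanSpace ℝ (Fin n) => ‖φ x‖ ^ 2 :=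
      ((aux_affine_continuous φ).norm).pow 2
    have hfiT : IntegrableOn (fun x => ‖φ x‖ ^ 2) T :=
      hφc.continuousOn.integrableOn_compact hTc
    set I := ∫ x in T, ‖φ x‖ ^ 2 with hI
    set S2 := ∑ i, ‖φ (r i)‖ ^ 2 with hS2
    have hS2nn : 0 ≤ S2 := Finset.sum_nonneg fun i _ => sq_nonneg _
    have hQ : vertexQuad r φ φ = (volume T).toReal / ((n : ℝ) + 1) * S2 := by
      unfold vertexQuad
      rw [← hT, hS2]
      congr 1
      exact Finset.sum_congr rfl fun i _ => real_inner_self_eq_norm_sq _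
    have hpt : ∀ x ∈ T, ‖φ x‖ ^ 2 ≤ S2 := by
      intro x hx
      obtain ⟨ι, t, w, ζ, hw0, hw1, hζ, hφx⟩ := aux_comb_repr φ hx
      have hbound : ∀ i ∈ t, ‖φ (ζ i)‖ ≤ Real.sqrt S2 := by
        intro i hi
        obtain ⟨j, hj⟩ := hζ i hi
        rw [← hj]
        calc ‖φ (r j)‖ = Real.sqrt (‖φ (r j)‖ ^ 2) := (Real.sqrt_sq (norm_nonneg _)).symm
          _ ≤ Real.sqrt S2 := Real.sqrt_le_sqrt
              (Finset.single_le_sum (f := fun j => ‖φ (r j)‖ ^ 2)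
                (fun i _ => sq_nonneg _) (Finset.mem_univ j))
      have hnx : ‖φ x‖ ≤ Real.sqrt S2 := by
        rw [hφx]
        calc ‖∑ i ∈ t, w i • φ (ζ i)‖ ≤ ∑ i ∈ t, ‖w i • φ (ζ i)‖ := norm_sum_le _ _
          _ ≤ ∑ i ∈ t, w i * Real.sqrt S2 := by
              refine Finset.sum_le_sum fun i hi => ?_
              rw [norm_smul, Real.norm_eq_abs, abs_of_nonneg (hw0 i hi)]
              exact mul_le_mul_of_nonneg_left (hbound i hi) (hw0 i hi)
          _ = Real.sqrt S2 := by rw [← Finset.sum_mul, hw1, one_mul]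
      calc ‖φ x‖ ^ 2 ≤ Real.sqrt S2 ^ 2 := pow_le_pow_left₀ (norm_nonneg _) hnx 2
        _ = S2 := Real.sq_sqrt hS2nn
    have hIub : I ≤ (volume T).toReal * S2 := by
      calc I ≤ ∫ _x in T, S2 := setIntegral_mono_on hfiT
            (integrableOn_const hTc.measure_lt_top.ne) hTm hpt
        _ = (volume T).toReal * S2 := by rw [setIntegral_const, smul_eq_mul]; rfl
    constructor
    · -- lower bound
      rw [hQ]
      calc 1 / ((n : ℝ) + 1) * I ≤ 1 / ((n : ℝ) + 1) * ((volume T).toReal * S2) :=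
            mul_le_mul_of_nonneg_left hIub (by positivity)
        _ = (volume T).toReal / ((n : ℝ) + 1) * S2 := by ring
    · -- upper bound
      set IB := ∫ x in Metric.ball z ρin, ‖φ x‖ ^ 2 with hIBdef
      have hIBnn : 0 ≤ IB := setIntegral_nonneg measurableSet_ball fun x _ => sq_nonneg _
      have hIBI : IB ≤ I := setIntegral_mono_set hfiT
        (Filter.Eventually.of_forall fun x => sq_nonneg _) hball.eventuallyLE
      set V1 := (volume (Metric.ball (0 : EuclideanSpace ℝ (Fin n)) 1)).toReal with hV1def
      have hV1 : 0 < V1 := ENNReal.toReal_pos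
        (Metric.measure_ball_pos volume 0 one_pos).ne' measure_ball_lt_top.ne
      have hballvol : ∀ (c : EuclideanSpace ℝ (Fin n)) (s : ℝ), 0 < s →
          (volume (Metric.ball c s)).toReal = s ^ n * V1 := by
        intro c s hs
        rw [hV1def, Measure.addHaar_ball_of_pos volume c hs, finrank_euclideanSpace_fin,
          ENNReal.toReal_mul, ENNReal.toReal_ofReal (by positivity)]
      set Vb := (volume (Metric.ball z ρin)).toReal with hVbdef
      have hVb : Vb = ρin ^ n * V1 := hballvol z ρin hρin
      have hVbpos : 0 < Vb := by rw [hVb]; positivity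
      set J := IB / Vb with hJ
      have hJnn : 0 ≤ J := div_nonneg hIBnn hVbpos.le
      have hA : ‖φ z‖ ^ 2 ≤ J := by
        rw [hJ, le_div_iff₀ hVbpos]
        have h := aux_center_bound φ z ρin
        rw [← hVbdef, ← hIBdef] at h
        linarith [h]
      have hB : ∀ u : EuclideanSpace ℝ (Fin n), ‖u‖ = 1 →
          ‖φ.linear u‖ ^ 2 ≤ 64 / 25 * 8 ^ n * J / ρin ^ 2 := by
        intro u hu
        have h := aux_dir_bound φ z hρin hu
        rw [hballvol _ _ (by positivity : (0:ℝ) < ρin / 8), ← hIBdef] at h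
        have hVs : (ρin / 8) ^ n * V1 = Vb / 8 ^ n := by
          rw [hVb, div_pow]
          field_simp
        rw [hVs] at h
        rw [hJ, le_div_iff₀ (by positivity : (0:ℝ) < ρin ^ 2), mul_div_assoc' _ IB Vb,
          le_div_iff₀ hVbpos]
        have h2 := mul_le_mul_of_nonneg_left h
          (show (0:ℝ) ≤ 64 / 25 * 8 ^ n by positivity)
        calc ‖φ.linear u‖ ^ 2 * ρin ^ 2 * Vb
            = 64 / 25 * 8 ^ n * (25 / 64 * ρin ^ 2 * (Vb / 8 ^ n)
                * ‖φ.linear u‖ ^ 2) := by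
              field_simp
          _ ≤ 64 / 25 * 8 ^ n * IB := h2
      have hvert : ∀ i, ‖φ (r i)‖ ^ 2 ≤ (2 + 128 / 25 * 8 ^ n * ρ ^ 2) * J := by
        intro i
        obtain ⟨u, hu, hLle⟩ : ∃ u : EuclideanSpace ℝ (Fin n), ‖u‖ = 1 ∧
            ‖φ.linear (r i - z)‖ ≤ ρ * ρin * ‖φ.linear u‖ := by
          by_cases hiz : r i = z
          · have hnpos : 0 < n := by rcases hn with h | h <;> omega
            refine ⟨EuclideanSpace.single (⟨0, hnpos⟩ : Fin n) (1 : ℝ), ?_, ?_⟩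
            · rw [EuclideanSpace.norm_single, norm_one]
            · rw [hiz, sub_self, map_zero, norm_zero]; positivity
          · have hw0 : r i - z ≠ 0 := sub_ne_zero.mpr hiz
            refine ⟨‖r i - z‖⁻¹ • (r i - z), norm_smul_inv_norm hw0, ?_⟩
            have hdist : ‖r i - z‖ ≤ ρ * ρin := by
              rw [← dist_eq_norm]
              exact (Metric.dist_le_diam_of_mem hTb
                (subset_convexHull ℝ _ (Set.mem_range_self i)) hz).trans hdiam
            have hwpos : 0 < ‖r i - z‖ := norm_pos_iff.mpr hw0
            rw [LinearMap.map_smul, norm_smul, norm_inv, norm_norm]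
            calc ‖φ.linear (r i - z)‖
                = ‖r i - z‖ * (‖r i - z‖⁻¹ * ‖φ.linear (r i - z)‖) := by field_simp
              _ ≤ ρ * ρin * (‖r i - z‖⁻¹ * ‖φ.linear (r i - z)‖) :=
                  mul_le_mul_of_nonneg_right hdist (by positivity)
        have hB2 := hB u hu
        have ha : φ (r i) = φ.linear (r i - z) + φ z := by
          have h := φ.map_vadd z (r i - z)
          simpa [vadd_eq_add, sub_add_cancel] using h
        have hφi : ‖φ (r i)‖ ≤ ‖φ z‖ + ‖φ.linear (r i - z)‖ := by
          rw [ha]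
          exact (norm_add_le _ _).trans_eq (add_comm _ _)
        have hsq : ‖φ (r i)‖ ^ 2 ≤ 2 * ‖φ z‖ ^ 2 + 2 * ‖φ.linear (r i - z)‖ ^ 2 := by
          nlinarith [hφi, sq_nonneg (‖φ z‖ - ‖φ.linear (r i - z)‖), norm_nonneg (φ (r i)),
            norm_nonneg (φ z), norm_nonneg (φ.linear (r i - z))]
        have hL2 : ‖φ.linear (r i - z)‖ ^ 2 ≤ (ρ * ρin) ^ 2 * ‖φ.linear u‖ ^ 2 := by
          calc ‖φ.linear (r i - z)‖ ^ 2 ≤ (ρ * ρin * ‖φ.linear u‖) ^ 2 :=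
                pow_le_pow_left₀ (norm_nonneg _) hLle 2
            _ = (ρ * ρin) ^ 2 * ‖φ.linear u‖ ^ 2 := by ring
        have hmul : (ρ * ρin) ^ 2 * ‖φ.linear u‖ ^ 2
            ≤ (ρ * ρin) ^ 2 * (64 / 25 * 8 ^ n * J / ρin ^ 2) :=
          mul_le_mul_of_nonneg_left hB2 (by positivity)
        have hcancel : 2 * ((ρ * ρin) ^ 2 * (64 / 25 * 8 ^ n * J / ρin ^ 2))
            = 128 / 25 * 8 ^ n * ρ ^ 2 * J := by
          field_simp
          ring
        calc ‖φ (r i)‖ ^ 2 ≤ 2 * ‖φ z‖ ^ 2 + 2 * ‖φ.linear (r i - z)‖ ^ 2 := hsq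
          _ ≤ 2 * J + 2 * ((ρ * ρin) ^ 2 * (64 / 25 * 8 ^ n * J / ρin ^ 2)) := by
              linarith [hA, hL2, hmul]
          _ = (2 + 128 / 25 * 8 ^ n * ρ ^ 2) * J := by rw [hcancel]; ring
      have hsum : S2 ≤ ((n : ℝ) + 1) * ((2 + 128 / 25 * 8 ^ n * ρ ^ 2) * J) := by
        rw [hS2]
        calc (∑ i, ‖φ (r i)‖ ^ 2)
            ≤ ∑ _i : Fin (n + 1), (2 + 128 / 25 * 8 ^ n * ρ ^ 2) * J :=
              Finset.sum_le_sum fun i _ => hvert i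
          _ = ((n : ℝ) + 1) * ((2 + 128 / 25 * 8 ^ n * ρ ^ 2) * J) := by
              rw [Finset.sum_const, Finset.card_univ, Fintype.card_fin, nsmul_eq_mul]
              push_cast
              ring
      have hvTle : (volume T).toReal ≤ ρ ^ n * Vb := by
        have hsub : T ⊆ Metric.closedBall z (ρ * ρin) := by
          intro x hx
          rw [Metric.mem_closedBall]
          exact (Metric.dist_le_diam_of_mem hTb hx hz).trans hdiam
        have h1 : volume T ≤ volume (Metric.closedBall z (ρ * ρin)) := measure_mono hsub
        have h2 : (volume (Metric.closedBall z (ρ * ρin))).toReal = (ρ * ρin) ^ n * V1 := by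
          rw [hV1def, Measure.addHaar_closedBall volume z
            (by positivity : (0:ℝ) ≤ ρ * ρin), finrank_euclideanSpace_fin,
            ENNReal.toReal_mul, ENNReal.toReal_ofReal (by positivity)]
        calc (volume T).toReal ≤ (volume (Metric.closedBall z (ρ * ρin))).toReal :=
              ENNReal.toReal_mono measure_closedBall_lt_top.ne h1
          _ = (ρ * ρin) ^ n * V1 := h2
          _ = ρ ^ n * Vb := by rw [hVb, mul_pow]; ring
      have hDnn : 0 ≤ (2 + 128 / 25 * 8 ^ n * ρ ^ 2) * J :=
        mul_nonneg (by positivity) hJnn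
      rw [hQ]
      calc (volume T).toReal / ((n : ℝ) + 1) * S2
          ≤ (volume T).toReal / ((n : ℝ) + 1)
              * (((n : ℝ) + 1) * ((2 + 128 / 25 * 8 ^ n * ρ ^ 2) * J)) :=
            mul_le_mul_of_nonneg_left hsum (by positivity)
        _ = (volume T).toReal * ((2 + 128 / 25 * 8 ^ n * ρ ^ 2) * J) := by
            field_simp
        _ ≤ (ρ ^ n * Vb) * ((2 + 128 / 25 * 8 ^ n * ρ ^ 2) * J) :=
            mul_le_mul_of_nonneg_right hvTle hDnn
        _ = (ρ ^ n * (2 + 128 / 25 * 8 ^ n * ρ ^ 2)) * IB := by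
            rw [hJ]
            field_simp
        _ ≤ (ρ ^ n * (2 + 128 / 25 * 8 ^ n * ρ ^ 2)) * I :=
            mul_le_mul_of_nonneg_left hIBI (by positivity)
end

section
/- Let L be a measurable symmetric matrix-valued coefficient that is uniformly bounded and uniformly positive definite: l₀|ξ|² ≤ (L(x)ξ)·ξ ≤ l₁|ξ|² for all ξ and a.e. x, with 0 < l₀ ≤ l₁. Let Q be the elementwise vertex quadrature rule on a shape-regular simplicial mesh applied to (Lφ, ψ). Then there exist constants C₀, C₁ > 0 independent of the mesh size h such that (Lφ,φ)_Q ≥ C₀‖φ‖²_{L²} and (Lφ,ψ)_Q ≤ C₁‖φ‖_{L²}‖ψ‖_{L²} for all elementwise-linear φ, ψ. Hence (Lφ,φ)_Q^{1/2} defines a norm on elementwise-linear functions equivalent to the L² norm. -/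
open Matrix MeasureTheory BigOperators
open scoped ENNReal NNReal
noncomputable section
variable {n : ℕ}

def refVert (n : ℕ) : Fin (n+1) → EuclideanSpace ℝ (Fin n) :=
  fun i => Fin.cases 0 (fun j => EuclideanSpace.single j 1) i

def refS (n : ℕ) : Set (EuclideanSpace ℝ (Fin n)) := convexHull ℝ (Set.range (refVert n))

lemma refVert_zero : refVert n 0 = 0 := rfl
lemma refVert_succ (j : Fin n) : refVert n j.succ = EuclideanSpace.single j 1 := rfl

lemma single_linindep : LinearIndependent ℝ (fun j : Fin n => (EuclideanSpace.single j 1 : EuclideanSpace ℝ (Fin n))) := by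
  have : (fun j : Fin n => (EuclideanSpace.single j 1 : EuclideanSpace ℝ (Fin n)))
      = ⇑(EuclideanSpace.basisFun (Fin n) ℝ).toBasis := by
    funext j; simp [EuclideanSpace.basisFun_apply]
  rw [this]
  exact Module.Basis.linearIndependent _

def succEquiv (n : ℕ) : Fin n ≃ {x : Fin (n+1) // x ≠ 0} :=
  { toFun := fun j => ⟨j.succ, Fin.succ_ne_zero j⟩
    invFun := fun i => (i : Fin (n+1)).pred i.2
    left_inv := fun j => by simp
    right_inv := fun i => by simp }

lemma refVert_affineIndependent : AffineIndependent ℝ (refVert n) := by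
  rw [affineIndependent_iff_linearIndependent_vsub ℝ (refVert n) 0]
  have hcomp : (fun (i : {x : Fin (n+1) // x ≠ 0}) => refVert n ↑i -ᵥ refVert n 0) ∘ ⇑(succEquiv n)
      = fun j : Fin n => (EuclideanSpace.single j 1 : EuclideanSpace ℝ (Fin n)) := by
    funext j
    show refVert n (j.succ) -ᵥ refVert n 0 = _
    rw [refVert_succ, refVert_zero]; simp
  have h := single_linindep (n := n)
  rw [← hcomp] at h
  exact (linearIndependent_equiv (succEquiv n)).mp h

lemma refS_compact : IsCompact (refS n) :=
  (Set.finite_range (refVert n)).isCompact_convexHull ℝ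

lemma refS_convex : Convex ℝ (refS n) := convex_convexHull _ _

lemma refS_measurable : MeasurableSet (refS n) :=
  refS_compact.isClosed.measurableSet

lemma refS_vol_lt_top : volume (refS n) < ⊤ := refS_compact.measure_lt_top

lemma refS_span : affineSpan ℝ (Set.range (refVert n)) = ⊤ := by
  rw [AffineIndependent.affineSpan_eq_top_iff_card_eq_finrank_add_one refVert_affineIndependent]
  simp [finrank_euclideanSpace_fin]

lemma refS_vol_pos : 0 < volume (refS n) := by
  have hspan : affineSpan ℝ (refS n) = ⊤ := by
    rw [refS, affineSpan_convexHull, refS_span]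
  have hint : (interior (refS n)).Nonempty :=
    (refS_convex.interior_nonempty_iff_affineSpan_eq_top).mpr hspan
  obtain ⟨x, hx⟩ := hint
  have := isOpen_interior.measure_pos (μ := volume) ⟨x, hx⟩
  exact lt_of_lt_of_le this (measure_mono interior_subset)

lemma refS_coords {x : EuclideanSpace ℝ (Fin n)} (hx : x ∈ refS n) (j : Fin n) :
    x j ∈ Set.Icc (0:ℝ) 1 := by
  have hconv : Convex ℝ {y : EuclideanSpace ℝ (Fin n) | ∀ j, y j ∈ Set.Icc (0:ℝ) 1} := by
    have : {y : EuclideanSpace ℝ (Fin n) | ∀ j, y j ∈ Set.Icc (0:ℝ) 1}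
        = ⋂ j, (fun y : EuclideanSpace ℝ (Fin n) => y j) ⁻¹' Set.Icc (0:ℝ) 1 := by
      ext y; simp
    rw [this]
    refine convex_iInter fun j => ?_
    exact (convex_Icc (0:ℝ) 1).linear_preimage
      ((EuclideanSpace.proj j : EuclideanSpace ℝ (Fin n) →L[ℝ] ℝ) : EuclideanSpace ℝ (Fin n) →ₗ[ℝ] ℝ)
  have hsub : refS n ⊆ {y : EuclideanSpace ℝ (Fin n) | ∀ j, y j ∈ Set.Icc (0:ℝ) 1} := by
    apply convexHull_min _ hconv
    rintro y ⟨i, rfl⟩ 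
    refine Fin.cases ?_ ?_ i
    · intro j; simp [refVert_zero, Set.mem_Icc]
    · intro k j
      rw [refVert_succ]
      rcases eq_or_ne j k with h | h <;>
        simp [EuclideanSpace.single_apply, h, Set.mem_Icc]
  exact hsub hx j

abbrev Pp (n : ℕ) := (Fin n → ℝ) × (Fin n → Fin n → ℝ)

def Gq (p : Pp n) (x : EuclideanSpace ℝ (Fin n)) : Fin n → ℝ :=
  fun i => p.1 i + ∑ j, p.2 i j * x j

lemma Gq_add (p q : Pp n) (x : EuclideanSpace ℝ (Fin n)) :
    Gq (p + q) x = Gq p x + Gq q x := by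
  funext i; simp [Gq, Finset.sum_add_distrib, add_mul]; ring

lemma Gq_smul (c : ℝ) (p : Pp n) (x : EuclideanSpace ℝ (Fin n)) :
    Gq (c • p) x = c • Gq p x := by
  funext i; simp [Gq, Finset.mul_sum, mul_add, mul_assoc]

lemma Gq_continuous (x : EuclideanSpace ℝ (Fin n)) :
    Continuous fun p : Pp n => Gq p x := by
  unfold Gq; fun_prop

lemma dot_self_nonneg (v : Fin n → ℝ) : 0 ≤ v ⬝ᵥ v :=
  Finset.sum_nonneg fun j _ => mul_self_nonneg _

lemma Gq_zero (x : EuclideanSpace ℝ (Fin n)) : Gq (0 : Pp n) x = 0 := by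
  funext i; simp [Gq]

lemma Gq_zero_vert (p : Pp n) : Gq p 0 = p.1 := by funext i; simp [Gq]

lemma Gq_single_vert (p : Pp n) (k : Fin n) :
    Gq p (EuclideanSpace.single k 1) = fun i => p.1 i + p.2 i k := by
  funext i; simp [Gq, EuclideanSpace.single_apply]

def evalMap (n : ℕ) : Pp n →ₗ[ℝ] (Fin (n+1) → Fin n → ℝ) :=
  { toFun := fun p => fun i => Gq p (refVert n i)
    map_add' := fun p q => by
      funext i; show Gq (p + q) (refVert n i) = _; rw [Gq_add]; rfl
    map_smul' := fun c p => by
      funext i; show Gq (c • p) (refVert n i) = _; rw [Gq_smul]; rfl }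

lemma evalMap_injective : Function.Injective (evalMap n) := by
  rw [injective_iff_map_eq_zero]
  intro p hp
  have h0 : Gq p (refVert n 0) = 0 := congrFun hp 0
  have h1 : p.1 = 0 := by rwa [show refVert n 0 = 0 from rfl, Gq_zero_vert] at h0
  have h2 : p.2 = 0 := by
    funext i k
    have hk : Gq p (refVert n k.succ) = 0 := congrFun hp k.succ
    rw [show refVert n k.succ = EuclideanSpace.single k 1 from rfl, Gq_single_vert] at hk
    have := congrFun hk i
    simp only [Pi.zero_apply] at this
    have h1i : p.1 i = 0 := congrFun h1 i
    simpa [h1i] using this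
  exact Prod.ext h1 h2

def N2 (p : Pp n) : ℝ := ∑ i, (Gq p (refVert n i)) ⬝ᵥ (Gq p (refVert n i))

lemma N2_nonneg (p : Pp n) : 0 ≤ N2 p :=
  Finset.sum_nonneg fun i _ => Finset.sum_nonneg fun j _ => mul_self_nonneg _

lemma N2_continuous : Continuous (N2 (n := n)) := by
  unfold N2 Gq dotProduct
  fun_prop

lemma N2_eq_zero {p : Pp n} (h : N2 p = 0) : p = 0 := by
  apply evalMap_injective
  funext i
  have : (Gq p (refVert n i)) ⬝ᵥ (Gq p (refVert n i)) = 0 := by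
    have := (Finset.sum_eq_zero_iff_of_nonneg (fun i _ => dot_self_nonneg _)).mp h i (Finset.mem_univ _)
    exact this
  have hv : Gq p (refVert n i) = 0 := by
    funext k
    have hk := (Finset.sum_eq_zero_iff_of_nonneg (fun j _ => mul_self_nonneg _)).mp this k (Finset.mem_univ _)
    exact mul_self_eq_zero.mp hk
  simp [evalMap, hv, Gq_zero]

lemma N2_pos {p : Pp n} (h : p ≠ 0) : 0 < N2 p :=
  lt_of_le_of_ne (N2_nonneg p) (fun h0 => h (N2_eq_zero h0.symm))

lemma N2_smul (c : ℝ) (p : Pp n) : N2 (c • p) = c^2 * N2 p := by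
  unfold N2
  rw [Finset.mul_sum]
  refine Finset.sum_congr rfl fun i _ => ?_
  rw [Gq_smul, smul_dotProduct, dotProduct_smul]
  simp [smul_eq_mul]; ring

lemma sphere_compact : IsCompact {p : Pp n | N2 p = 1} := by
  obtain ⟨K, hK, hanti⟩ := LinearMap.injective_iff_antilipschitz (evalMap n) |>.mp evalMap_injective
  have hclosed : IsClosed {p : Pp n | N2 p = 1} :=
    isClosed_eq N2_continuous continuous_const
  have hbdd : {p : Pp n | N2 p = 1} ⊆ Metric.closedBall 0 K := by
    intro p hp
    have h1 : ∀ i k, |Gq p (refVert n i) k| ≤ 1 := by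
      intro i k
      have hsq : (Gq p (refVert n i) k)^2 ≤ N2 p := by
        calc (Gq p (refVert n i) k)^2 ≤ (Gq p (refVert n i)) ⬝ᵥ (Gq p (refVert n i)) := by
              rw [dotProduct]
              refine Finset.single_le_sum (f := fun j => Gq p (refVert n i) j * Gq p (refVert n i) j)
                (fun j _ => mul_self_nonneg _) (Finset.mem_univ k) |>.trans_eq' (by ring)
        _ ≤ N2 p := Finset.single_le_sum (f := fun i => (Gq p (refVert n i)) ⬝ᵥ (Gq p (refVert n i)))
              (fun i _ => dot_self_nonneg _) (Finset.mem_univ i)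
      have : (Gq p (refVert n i) k)^2 ≤ 1 := hsq.trans_eq hp
      nlinarith [abs_nonneg (Gq p (refVert n i) k), sq_abs (Gq p (refVert n i) k)]
    have hnorm : ‖evalMap n p‖ ≤ 1 := by
      rw [pi_norm_le_iff_of_nonneg zero_le_one]
      intro i
      rw [pi_norm_le_iff_of_nonneg zero_le_one]
      intro k
      exact (Real.norm_eq_abs _) ▸ h1 i k
    have := hanti.le_mul_dist p 0
    simp only [dist_zero_right, map_zero] at this
    rw [Metric.mem_closedBall, dist_zero_right]
    calc ‖p‖ ≤ K * ‖evalMap n p‖ := by simpa using this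
    _ ≤ K * 1 := by
        exact mul_le_mul_of_nonneg_left hnorm K.2
    _ = K := mul_one _
  exact (Metric.isCompact_of_isClosed_isBounded hclosed (Metric.isBounded_closedBall.subset hbdd))

def ellMap (v : Fin n → ℝ) : EuclideanSpace ℝ (Fin n) →ₗ[ℝ] ℝ :=
  ∑ j, v j • (EuclideanSpace.projₗ j)

lemma ellMap_apply (v : Fin n → ℝ) (x : EuclideanSpace ℝ (Fin n)) :
    ellMap v x = ∑ j, v j * x j := by
  simp [ellMap, LinearMap.sum_apply]

lemma hyperplane_volume_zero (v : Fin n → ℝ) (c : ℝ) (j₀ : Fin n) (hv : v j₀ ≠ 0) :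
    volume {x : EuclideanSpace ℝ (Fin n) | ∑ j, v j * x j = c} = 0 := by
  set ℓ := ellMap v with hℓ
  have hker : LinearMap.ker ℓ ≠ ⊤ := by
    intro htop
    have : ℓ (EuclideanSpace.single j₀ 1) = 0 := by
      have : EuclideanSpace.single j₀ (1:ℝ) ∈ LinearMap.ker ℓ := by rw [htop]; trivial
      exact this
    rw [ellMap_apply] at this
    simp [EuclideanSpace.single_apply] at this
    exact hv this
  set x₀ : EuclideanSpace ℝ (Fin n) := EuclideanSpace.single j₀ (c / v j₀) with hx₀
  have hlx₀ : ℓ x₀ = c := by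
    rw [ellMap_apply]
    simp [hx₀, EuclideanSpace.single_apply]
    field_simp
  have hset : {x : EuclideanSpace ℝ (Fin n) | ∑ j, v j * x j = c}
      = (fun x => x + (-x₀)) ⁻¹' (LinearMap.ker ℓ : Set (EuclideanSpace ℝ (Fin n))) := by
    ext x
    simp only [Set.mem_setOf_eq, Set.mem_preimage, SetLike.mem_coe, LinearMap.mem_ker, map_add,
      map_neg, hlx₀]
    rw [ellMap_apply]
    constructor
    · intro h; rw [h]; ring
    · intro h; linarith
  rw [hset]
  rw [measure_preimage_add_right]
  exact Measure.addHaar_submodule volume _ hker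

def F1 (n : ℕ) (p : Pp n) : ℝ := ∫ x in refS n, (Gq p x) ⬝ᵥ (Gq p x)

lemma coord_cont (j : Fin n) : Continuous fun x : EuclideanSpace ℝ (Fin n) => x j :=
  (EuclideanSpace.proj j).continuous

lemma Gq_cont_x (p : Pp n) : Continuous fun x : EuclideanSpace ℝ (Fin n) => (Gq p x) ⬝ᵥ (Gq p x) := by
  unfold Gq dotProduct
  refine continuous_finset_sum _ fun i _ => Continuous.mul ?_ ?_ <;>
    exact continuous_const.add (continuous_finset_sum _ fun j _ => continuous_const.mul (coord_cont j))

lemma Gq_integrableOn (p : Pp n) :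
    IntegrableOn (fun x => (Gq p x) ⬝ᵥ (Gq p x)) (refS n) volume :=
  (Gq_cont_x p).continuousOn.integrableOn_compact refS_compact

lemma Gq_abs_le (p : Pp n) {x : EuclideanSpace ℝ (Fin n)} (hx : x ∈ refS n) (i : Fin n) :
    |Gq p x i| ≤ (n + 1) * ‖p‖ := by
  have h1 : |p.1 i| ≤ ‖p‖ := by
    calc |p.1 i| = ‖p.1 i‖ := (Real.norm_eq_abs _).symm
    _ ≤ ‖p.1‖ := norm_le_pi_norm p.1 i
    _ ≤ ‖p‖ := norm_fst_le p
  have h2 : ∀ j, |p.2 i j| ≤ ‖p‖ := by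
    intro j
    calc |p.2 i j| = ‖p.2 i j‖ := (Real.norm_eq_abs _).symm
    _ ≤ ‖p.2 i‖ := norm_le_pi_norm (p.2 i) j
    _ ≤ ‖p.2‖ := norm_le_pi_norm p.2 i
    _ ≤ ‖p‖ := norm_snd_le p
  have hxj : ∀ j, |x j| ≤ 1 := by
    intro j
    have := refS_coords hx j
    rw [Set.mem_Icc] at this
    rw [abs_le]; constructor <;> linarith [this.1, this.2]
  calc |Gq p x i| ≤ |p.1 i| + |∑ j, p.2 i j * x j| := abs_add_le _ _
  _ ≤ |p.1 i| + ∑ j, |p.2 i j * x j| := by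
      gcongr; exact Finset.abs_sum_le_sum_abs _ _
  _ ≤ ‖p‖ + ∑ _j : Fin n, ‖p‖ := by
      refine add_le_add h1 (Finset.sum_le_sum fun j _ => ?_)
      rw [abs_mul]
      calc |p.2 i j| * |x j| ≤ ‖p‖ * 1 :=
            mul_le_mul (h2 j) (hxj j) (abs_nonneg _) (norm_nonneg _)
      _ = ‖p‖ := mul_one _
  _ = (1 + n) * ‖p‖ := by
      rw [Finset.sum_const, Finset.card_univ, Fintype.card_fin]
      ring
  _ = (n + 1) * ‖p‖ := by ring

lemma Gq_dot_abs_le (p : Pp n) {x : EuclideanSpace ℝ (Fin n)} (hx : x ∈ refS n) :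
    |(Gq p x) ⬝ᵥ (Gq p x)| ≤ n * ((n + 1) * ‖p‖)^2 := by
  rw [dotProduct, abs_of_nonneg (Finset.sum_nonneg fun j _ => mul_self_nonneg _)]
  calc ∑ i, Gq p x i * Gq p x i ≤ ∑ _i : Fin n, ((n + 1) * ‖p‖)^2 := by
        apply Finset.sum_le_sum
        intro i _
        have := Gq_abs_le p hx i
        nlinarith [abs_nonneg (Gq p x i), sq_abs (Gq p x i), neg_abs_le (Gq p x i), le_abs_self (Gq p x i)]
  _ = n * ((n + 1) * ‖p‖)^2 := by
      rw [Finset.sum_const, Finset.card_univ, Fintype.card_fin, nsmul_eq_mul]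

lemma fpx_cont (x : EuclideanSpace ℝ (Fin n)) :
    Continuous fun p : Pp n => (Gq p x) ⬝ᵥ (Gq p x) := by
  unfold Gq dotProduct
  fun_prop

lemma F1_continuous : Continuous (F1 n) := by
  rw [continuous_iff_continuousAt]
  intro p₀
  have hball : Metric.ball p₀ 1 ∈ nhds p₀ := Metric.ball_mem_nhds _ one_pos
  apply continuousAt_of_dominated (bound := fun _ => (n:ℝ) * ((n + 1) * (‖p₀‖ + 1))^2)
  · exact Filter.Eventually.of_forall fun p => (Gq_cont_x p).aestronglyMeasurable.restrict
  · refine Filter.eventually_of_mem hball fun p hp => ?_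
    refine (ae_restrict_iff' refS_measurable).mpr (Filter.Eventually.of_forall fun x hx => ?_)
    have hpn : ‖p‖ ≤ ‖p₀‖ + 1 := by
      have := mem_ball_iff_norm.mp hp
      calc ‖p‖ = ‖p₀ + (p - p₀)‖ := by ring_nf
      _ ≤ ‖p₀‖ + ‖p - p₀‖ := norm_add_le _ _
      _ ≤ ‖p₀‖ + 1 := by linarith
    rw [Real.norm_eq_abs]
    calc |(Gq p x) ⬝ᵥ (Gq p x)| ≤ (n:ℝ) * ((n + 1) * ‖p‖)^2 := Gq_dot_abs_le p hx
    _ ≤ (n:ℝ) * ((n + 1) * (‖p₀‖ + 1))^2 := by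
        have h0 : (0:ℝ) ≤ ‖p‖ := norm_nonneg _
        gcongr
  · exact integrableOn_const refS_vol_lt_top.ne
  · exact (ae_restrict_iff' refS_measurable).mpr
      (Filter.Eventually.of_forall fun x _ => (fpx_cont x).continuousAt)

lemma F1_nonneg (p : Pp n) : 0 ≤ F1 n p :=
  setIntegral_nonneg refS_measurable fun x _ => dot_self_nonneg _

lemma F1_smul (c : ℝ) (p : Pp n) : F1 n (c • p) = c^2 * F1 n p := by
  unfold F1
  have hcong : ∫ x in refS n, Gq (c • p) x ⬝ᵥ Gq (c • p) x
      = ∫ x in refS n, c^2 • (Gq p x ⬝ᵥ Gq p x) := by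
    apply setIntegral_congr_fun refS_measurable
    intro x _
    show Gq (c • p) x ⬝ᵥ Gq (c • p) x = c^2 • (Gq p x ⬝ᵥ Gq p x)
    rw [Gq_smul, smul_dotProduct, dotProduct_smul]
    simp [smul_eq_mul]; ring
  rw [hcong, integral_smul, smul_eq_mul]

lemma F1_pos {p : Pp n} (hp : p ≠ 0) : 0 < F1 n p := by
  unfold F1
  rw [setIntegral_pos_iff_support_of_nonneg_ae
    ((ae_restrict_iff' refS_measurable).mpr (Filter.Eventually.of_forall fun x _ => dot_self_nonneg _))
    (Gq_integrableOn p)]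
  -- find a coordinate i₀ whose "row" is nonzero, and show the zero set of Gq · i₀ is null
  have key : ∃ i₀ : Fin n, volume {x : EuclideanSpace ℝ (Fin n) | Gq p x i₀ = 0} = 0 := by
    by_cases h2 : ∃ i j, p.2 i j ≠ 0
    · obtain ⟨i₀, j₀, hij⟩ := h2
      refine ⟨i₀, ?_⟩
      have : {x : EuclideanSpace ℝ (Fin n) | Gq p x i₀ = 0}
          = {x : EuclideanSpace ℝ (Fin n) | ∑ j, p.2 i₀ j * x j = -p.1 i₀} := by
        ext x; simp only [Set.mem_setOf_eq, Gq]; constructor <;> intro h <;> linarith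
      rw [this]
      exact hyperplane_volume_zero _ _ j₀ hij
    · push_neg at h2
      have hp2 : p.2 = 0 := by funext i j; exact h2 i j
      have hp1 : p.1 ≠ 0 := by
        intro h1; exact hp (Prod.ext h1 hp2)
      obtain ⟨i₀, hi₀⟩ := Function.ne_iff.mp hp1
      refine ⟨i₀, ?_⟩
      have : {x : EuclideanSpace ℝ (Fin n) | Gq p x i₀ = 0} = (∅ : Set _) := by
        ext x
        simp only [Set.mem_setOf_eq, Set.mem_empty_iff_false, iff_false, Gq]
        intro h
        apply hi₀
        have : ∑ j, p.2 i₀ j * x j = 0 := by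
          apply Finset.sum_eq_zero; intro j _; rw [hp2]; simp
        rw [this] at h; simpa using h
      rw [this]; exact measure_empty
  obtain ⟨i₀, hi₀⟩ := key
  have hsub : refS n \ {x : EuclideanSpace ℝ (Fin n) | Gq p x i₀ = 0}
      ⊆ Function.support (fun x => (Gq p x) ⬝ᵥ (Gq p x)) ∩ refS n := by
    rintro x ⟨hx, hxz⟩
    refine ⟨?_, hx⟩
    simp only [Set.mem_setOf_eq] at hxz
    have hpos : 0 < (Gq p x) ⬝ᵥ (Gq p x) := by
      rw [dotProduct]
      have hterm : 0 < Gq p x i₀ * Gq p x i₀ := mul_self_pos.mpr hxz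
      have h3 : Gq p x i₀ * Gq p x i₀ ≤ ∑ j, Gq p x j * Gq p x j :=
        Finset.single_le_sum (f := fun j => Gq p x j * Gq p x j)
          (fun j _ => mul_self_nonneg _) (Finset.mem_univ i₀)
      linarith
    exact ne_of_gt hpos
  calc (0:ℝ≥0∞) < volume (refS n) := refS_vol_pos
  _ = volume (refS n \ {x : EuclideanSpace ℝ (Fin n) | Gq p x i₀ = 0}) := (measure_diff_null hi₀).symm
  _ ≤ volume (Function.support (fun x => (Gq p x) ⬝ᵥ (Gq p x)) ∩ refS n) := measure_mono hsub

lemma N2_zero : N2 (0 : Pp n) = 0 := by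
  unfold N2
  apply Finset.sum_eq_zero
  intro i _
  rw [Gq_zero]
  simp

lemma exists_mu (hn0 : 0 < n) : ∃ μs > (0:ℝ), ∀ p : Pp n, μs * N2 p ≤ F1 n p := by
  haveI : NeZero n := ⟨hn0.ne'⟩
  -- the sphere is nonempty
  set p₀ : Pp n := (fun _ => 1, 0) with hp₀def
  have hp₀ : p₀ ≠ 0 := by
    intro h
    have := congrFun (congrArg Prod.fst h) ⟨0, hn0⟩
    simpa [hp₀def] using this
  have hN2p₀ : 0 < N2 p₀ := N2_pos hp₀
  set q : Pp n := (Real.sqrt (N2 p₀))⁻¹ • p₀ with hqdef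
  have hq : N2 q = 1 := by
    rw [hqdef, N2_smul]
    rw [inv_pow, Real.sq_sqrt (le_of_lt hN2p₀)]
    field_simp
  obtain ⟨ps, hpsS, hpsmin⟩ := sphere_compact.exists_isMinOn ⟨q, hq⟩
    F1_continuous.continuousOn
  rw [isMinOn_iff] at hpsmin
  have hps_ne : ps ≠ 0 := by
    intro h
    rw [h] at hpsS
    simp only [Set.mem_setOf_eq, N2_zero] at hpsS
    norm_num at hpsS
  refine ⟨F1 n ps, F1_pos hps_ne, fun p => ?_⟩
  by_cases hp : p = 0
  · rw [hp, N2_zero, mul_zero]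
    exact F1_nonneg 0
  · have hN2p : 0 < N2 p := N2_pos hp
    set t : ℝ := Real.sqrt (N2 p) with htdef
    have ht : 0 < t := Real.sqrt_pos.mpr hN2p
    have hqp : N2 (t⁻¹ • p) = 1 := by
      rw [N2_smul, inv_pow, htdef, Real.sq_sqrt (le_of_lt hN2p)]
      field_simp
    have := hpsmin _ hqp
    rw [F1_smul] at this
    have ht2 : t^2 = N2 p := Real.sq_sqrt (le_of_lt hN2p)
    have h2 : F1 n ps * t^2 ≤ F1 n p := by
      rw [inv_pow] at this
      have hpos : (0:ℝ) < t^2 := by positivity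
      calc F1 n ps * t^2 ≤ ((t^2)⁻¹ * F1 n p) * t^2 := by
            apply mul_le_mul_of_nonneg_right this (le_of_lt hpos)
      _ = F1 n p := by field_simp
    calc F1 n ps * N2 p = F1 n ps * t^2 := by rw [ht2]
    _ ≤ F1 n p := h2

lemma coord_expand (x : EuclideanSpace ℝ (Fin n)) : x = ∑ j, x j • EuclideanSpace.single j (1:ℝ) := by
  ext i; rw [WithLp.ofLp_sum, Finset.sum_apply]; simp [EuclideanSpace.single_apply]

def pOf (g : EuclideanSpace ℝ (Fin n) →ᵃ[ℝ] (Fin n → ℝ)) : (Fin n → ℝ) × (Fin n → Fin n → ℝ) :=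
  (g 0, fun i j => (g (EuclideanSpace.single j 1) - g 0) i)

lemma affine_decomp (g : EuclideanSpace ℝ (Fin n) →ᵃ[ℝ] (Fin n → ℝ))
    (y : EuclideanSpace ℝ (Fin n)) : g y = g.linear y + g 0 := by
  have h : g y = g.linear (y - 0) + g 0 := by
    simpa using AffineMap.map_vadd g 0 y
  simpa using h

lemma Gq_pOf (g : EuclideanSpace ℝ (Fin n) →ᵃ[ℝ] (Fin n → ℝ)) (x : EuclideanSpace ℝ (Fin n)) :
    Gq (pOf g) x = g x := by
  have hlin : g.linear x = ∑ j, x j • g.linear (EuclideanSpace.single j (1:ℝ)) := by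
    conv_lhs => rw [coord_expand x]
    rw [map_sum]
    exact Finset.sum_congr rfl fun j _ => g.linear.map_smul _ _
  have hco : ∀ j, g.linear (EuclideanSpace.single j (1:ℝ)) = g (EuclideanSpace.single j 1) - g 0 := by
    intro j; rw [affine_decomp]; ring_nf
  funext i
  rw [Gq, affine_decomp, hlin]
  simp only [Finset.sum_apply, Pi.add_apply, Pi.smul_apply, smul_eq_mul, pOf, hco]
  rw [add_comm]
  congr 1
  exact Finset.sum_congr rfl fun j _ => mul_comm _ _

lemma refS_vol_toReal_pos : 0 < (volume (refS n)).toReal :=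
  ENNReal.toReal_pos (ne_of_gt refS_vol_pos) (ne_of_lt refS_vol_lt_top)

lemma transfer (hn0 : 0 < n) : ∃ c₂ > (0:ℝ),
    ∀ (r : Fin (n+1) → EuclideanSpace ℝ (Fin n)), AffineIndependent ℝ r →
    ∀ φ : EuclideanSpace ℝ (Fin n) →ᵃ[ℝ] (Fin n → ℝ),
      (volume (convexHull ℝ (Set.range r))).toReal * (∑ i, (φ (r i)) ⬝ᵥ (φ (r i)))
        ≤ c₂ * ∫ x in convexHull ℝ (Set.range r), (φ x) ⬝ᵥ (φ x) := by
  haveI : Nonempty (Fin n) := Fin.pos_iff_nonempty.mp hn0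
  obtain ⟨μs, hμs, hmu⟩ := exists_mu hn0
  refine ⟨(volume (refS n)).toReal / μs, div_pos refS_vol_toReal_pos hμs, ?_⟩
  intro r hr φ
  -- linear independence of edge vectors
  have hli : LinearIndependent ℝ (fun j : Fin n => r j.succ - r 0) := by
    rw [affineIndependent_iff_linearIndependent_vsub ℝ r 0] at hr
    have hcomp : (fun (i : {x : Fin (n+1) // x ≠ 0}) => r ↑i -ᵥ r 0) ∘ ⇑(succEquiv n)
        = fun j : Fin n => r j.succ - r 0 := by funext j; rfl
    have := (linearIndependent_equiv (succEquiv n)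
      (f := fun (i : {x : Fin (n+1) // x ≠ 0}) => r ↑i -ᵥ r 0)).mpr hr
    rwa [hcomp] at this
  have hcard : Fintype.card (Fin n) = Module.finrank ℝ (EuclideanSpace ℝ (Fin n)) := by
    simp [finrank_euclideanSpace_fin]
  set bV : Module.Basis (Fin n) ℝ (EuclideanSpace ℝ (Fin n)) :=
    basisOfLinearIndependentOfCardEqFinrank hli hcard with hbV
  set b₀ : Module.Basis (Fin n) ℝ (EuclideanSpace ℝ (Fin n)) :=
    (EuclideanSpace.basisFun (Fin n) ℝ).toBasis with hb₀
  set M : EuclideanSpace ℝ (Fin n) ≃ₗ[ℝ] EuclideanSpace ℝ (Fin n) :=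
    b₀.equiv bV (Equiv.refl _) with hM
  have hMsingle : ∀ j, M (EuclideanSpace.single j 1) = r j.succ - r 0 := by
    intro j
    have h0 : b₀ j = EuclideanSpace.single j 1 := by
      rw [hb₀]; simp [EuclideanSpace.basisFun_apply]
    have := b₀.equiv_apply (e := Equiv.refl _) j bV
    rw [h0] at this
    rw [hM, this, hbV]
    exact congrFun (coe_basisOfLinearIndependentOfCardEqFinrank hli hcard) j
  -- the affine map
  set Aff : EuclideanSpace ℝ (Fin n) →ᵃ[ℝ] EuclideanSpace ℝ (Fin n) :=
    { toFun := fun x => r 0 + M x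
      linear := (M : EuclideanSpace ℝ (Fin n) →ₗ[ℝ] EuclideanSpace ℝ (Fin n))
      map_vadd' := by
        intro p v
        show r 0 + M (v + p) = M v + (r 0 + M p)
        rw [map_add]
        abel } with hAff
  have hAffapp : ∀ x, Aff x = r 0 + M x := fun x => rfl
  have hAvert : ∀ i, Aff (refVert n i) = r i := by
    intro i
    refine Fin.cases ?_ ?_ i
    · rw [hAffapp, refVert_zero]
      simp
    · intro j
      rw [hAffapp, refVert_succ, hMsingle]
      abel
  have himage : Aff '' (refS n) = convexHull ℝ (Set.range r) := by
    rw [refS, AffineMap.image_convexHull]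
    congr 1
    rw [← Set.range_comp]
    exact congrArg _ (funext hAvert)
  have hAinj : Function.Injective Aff := by
    intro x y hxy
    rw [hAffapp, hAffapp] at hxy
    exact M.injective (add_left_cancel hxy)
  -- continuous linear map for the derivative
  set Mclm : EuclideanSpace ℝ (Fin n) →L[ℝ] EuclideanSpace ℝ (Fin n) :=
    LinearMap.toContinuousLinearMap (M : EuclideanSpace ℝ (Fin n) →ₗ[ℝ] EuclideanSpace ℝ (Fin n)) with hMclm
  have hderiv : ∀ x ∈ refS n, HasFDerivWithinAt (⇑Aff) Mclm (refS n) x := by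
    intro x _
    have h1 : HasFDerivAt (fun x : EuclideanSpace ℝ (Fin n) => r 0 + M x) Mclm x := by
      have := Mclm.hasFDerivAt (x := x)
      exact this.const_add (r 0)
    exact (h1.hasFDerivWithinAt).congr (fun y _ => (hAffapp y).symm) (hAffapp x).symm
  set D : ℝ := |(Mclm : EuclideanSpace ℝ (Fin n) →L[ℝ] EuclideanSpace ℝ (Fin n)).det| with hD
  have hCOV : ∀ g : EuclideanSpace ℝ (Fin n) → ℝ,
      ∫ x in convexHull ℝ (Set.range r), g x = D * ∫ x in refS n, g (Aff x) := by
    intro g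
    rw [← himage]
    rw [integral_image_eq_integral_abs_det_fderiv_smul volume refS_measurable hderiv
      (hAinj.injOn) g]
    simp_rw [smul_eq_mul]
    rw [integral_const_mul]
  have hD0 : 0 ≤ D := abs_nonneg _
  -- volume identity
  have hvol : (volume (convexHull ℝ (Set.range r))).toReal = D * (volume (refS n)).toReal := by
    have h1 := hCOV (fun _ => (1:ℝ))
    rw [setIntegral_const, setIntegral_const] at h1
    simpa [Measure.real] using h1
  -- parameters of φ ∘ Aff
  set p : Pp n := pOf (φ.comp Aff) with hp
  have hGq : ∀ x, Gq p x = φ (Aff x) := by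
    intro x
    rw [hp, Gq_pOf]
    rfl
  have hvert : ∀ i, φ (r i) = Gq p (refVert n i) := by
    intro i
    rw [hGq, hAvert]
  have hint : ∫ x in convexHull ℝ (Set.range r), (φ x) ⬝ᵥ (φ x) = D * F1 n p := by
    rw [hCOV (fun y => (φ y) ⬝ᵥ (φ y))]
    unfold F1
    congr 1
    apply setIntegral_congr_fun refS_measurable
    intro x _
    simp only [hGq]
  have hN2 : (∑ i, (φ (r i)) ⬝ᵥ (φ (r i))) = N2 p := by
    unfold N2
    exact Finset.sum_congr rfl fun i _ => by rw [hvert]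
  rw [hvol, hN2, hint]
  have hkey : μs * N2 p ≤ F1 n p := hmu p
  have hVS : 0 < (volume (refS n)).toReal := refS_vol_toReal_pos
  calc D * (volume (refS n)).toReal * N2 p
      = ((volume (refS n)).toReal / μs) * (D * (μs * N2 p)) := by field_simp
  _ ≤ ((volume (refS n)).toReal / μs) * (D * F1 n p) := by
      apply mul_le_mul_of_nonneg_left _ (by positivity)
      exact mul_le_mul_of_nonneg_left hkey hD0

lemma dot_convexOn : ConvexOn ℝ Set.univ (fun w : Fin n → ℝ => w ⬝ᵥ w) := by
  refine ⟨convex_univ, ?_⟩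
  intro x _ y _ a b ha hb hab
  simp only [smul_eq_mul, dotProduct, Pi.add_apply, Pi.smul_apply, smul_eq_mul]
  rw [Finset.mul_sum, Finset.mul_sum, ← Finset.sum_add_distrib]
  apply Finset.sum_le_sum
  intro i _
  nlinarith [sq_nonneg (x i - y i), mul_nonneg ha hb]

-- elementwise upper bound for the integral by vertex values
lemma element_upper (r : Fin (n+1) → EuclideanSpace ℝ (Fin n))
    (φ : EuclideanSpace ℝ (Fin n) →ᵃ[ℝ] (Fin n → ℝ)) :
    ∫ x in convexHull ℝ (Set.range r), (φ x) ⬝ᵥ (φ x)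
      ≤ (volume (convexHull ℝ (Set.range r))).toReal * ∑ i, (φ (r i)) ⬝ᵥ (φ (r i)) := by
  set T : Set (EuclideanSpace ℝ (Fin n)) := convexHull ℝ (Set.range r) with hT
  have hTcompact : IsCompact T := (Set.finite_range r).isCompact_convexHull ℝ
  have hTmeas : MeasurableSet T := hTcompact.isClosed.measurableSet
  have hφcont : Continuous fun x : EuclideanSpace ℝ (Fin n) => (φ x) ⬝ᵥ (φ x) := by
    have h1 : Continuous φ := φ.continuous_of_finiteDimensional
    unfold dotProduct
    exact continuous_finset_sum _ fun i _ =>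
      ((continuous_apply i).comp h1).mul ((continuous_apply i).comp h1)
  have hint : IntegrableOn (fun x => (φ x) ⬝ᵥ (φ x)) T volume :=
    hφcont.continuousOn.integrableOn_compact hTcompact
  have hptwise : ∀ x ∈ T, (φ x) ⬝ᵥ (φ x) ≤ ∑ i, (φ (r i)) ⬝ᵥ (φ (r i)) := by
    intro x hx
    have hmem : φ x ∈ convexHull ℝ (φ '' Set.range r) := by
      rw [← AffineMap.image_convexHull]
      exact Set.mem_image_of_mem _ hx
    obtain ⟨y, hy, hxy⟩ := dot_convexOn.exists_ge_of_mem_convexHull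
      (Set.subset_univ _) hmem
    obtain ⟨z, ⟨i, rfl⟩, rfl⟩ := hy
    calc (φ x) ⬝ᵥ (φ x) ≤ (φ (r i)) ⬝ᵥ (φ (r i)) := hxy
    _ ≤ ∑ i', (φ (r i')) ⬝ᵥ (φ (r i')) :=
        Finset.single_le_sum (f := fun i' => (φ (r i')) ⬝ᵥ (φ (r i')))
          (fun i' _ => dot_self_nonneg _) (Finset.mem_univ i)
  calc ∫ x in T, (φ x) ⬝ᵥ (φ x)
      ≤ ∫ _x in T, (∑ i, (φ (r i)) ⬝ᵥ (φ (r i))) := by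
        apply setIntegral_mono_on hint _ hTmeas hptwise
        exact integrableOn_const hTcompact.measure_lt_top.ne
  _ = (volume T).toReal * ∑ i, (φ (r i)) ⬝ᵥ (φ (r i)) := by
        rw [setIntegral_const, smul_eq_mul]; rfl

section Lbounds
variable {L : EuclideanSpace ℝ (Fin n) → Matrix (Fin n) (Fin n) ℝ} {l₀ l₁ : ℝ}

lemma L_symm_dot (hLsym : ∀ x, (L x)ᵀ = L x) (x : EuclideanSpace ℝ (Fin n)) (u z : Fin n → ℝ) :
    ((L x) *ᵥ u) ⬝ᵥ z = ((L x) *ᵥ z) ⬝ᵥ u := by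
  calc ((L x) *ᵥ u) ⬝ᵥ z = z ⬝ᵥ ((L x) *ᵥ u) := dotProduct_comm _ _
  _ = (z ᵥ* (L x)) ⬝ᵥ u := (dotProduct_mulVec _ _ _)
  _ = ((L x)ᵀ *ᵥ z) ⬝ᵥ u := by rw [Matrix.mulVec_transpose]
  _ = ((L x) *ᵥ z) ⬝ᵥ u := by rw [hLsym x]

lemma Ldot_le (hl₀ : 0 < l₀) (hl : l₀ ≤ l₁)
    (hLsym : ∀ x, (L x)ᵀ = L x)
    (hLbound : ∀ (x : EuclideanSpace ℝ (Fin n)) (ξ : Fin n → ℝ),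
      l₀ * (ξ ⬝ᵥ ξ) ≤ ((L x) *ᵥ ξ) ⬝ᵥ ξ ∧ ((L x) *ᵥ ξ) ⬝ᵥ ξ ≤ l₁ * (ξ ⬝ᵥ ξ))
    (x : EuclideanSpace ℝ (Fin n)) (v w : Fin n → ℝ) {s : ℝ} (hs : 0 < s) :
    ((L x) *ᵥ v) ⬝ᵥ w ≤ (l₁/2) * (s * (v ⬝ᵥ v) + (w ⬝ᵥ w) / s) := by
  set c : ℝ := Real.sqrt s with hc
  have hc0 : 0 < c := Real.sqrt_pos.mpr hs
  have hc2 : c^2 = s := Real.sq_sqrt hs.le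
  set u : Fin n → ℝ := c • v with hu
  set z : Fin n → ℝ := c⁻¹ • w with hz
  have huz : ((L x) *ᵥ u) ⬝ᵥ z = ((L x) *ᵥ v) ⬝ᵥ w := by
    rw [hu, hz, Matrix.mulVec_smul, smul_dotProduct, dotProduct_smul]
    rw [smul_eq_mul, smul_eq_mul, ← mul_assoc]
    rw [mul_comm c c⁻¹, inv_mul_cancel₀ (ne_of_gt hc0), one_mul]
  have hexp : ∀ a b : Fin n → ℝ, ((L x) *ᵥ (a + b)) ⬝ᵥ (a + b)
      = ((L x) *ᵥ a) ⬝ᵥ a + 2 * (((L x) *ᵥ a) ⬝ᵥ b) + ((L x) *ᵥ b) ⬝ᵥ b := by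
    intro a b
    simp only [Matrix.mulVec_add, add_dotProduct, dotProduct_add]
    rw [L_symm_dot hLsym x b a]
    ring
  have hexp2 : ((L x) *ᵥ (u - z)) ⬝ᵥ (u - z)
      = ((L x) *ᵥ u) ⬝ᵥ u - 2 * (((L x) *ᵥ u) ⬝ᵥ z) + ((L x) *ᵥ z) ⬝ᵥ z := by
    have h := hexp u (-z)
    simp only [Matrix.mulVec_neg, dotProduct_neg, neg_dotProduct, neg_neg, mul_neg] at h
    rw [sub_eq_add_neg, h]
    ring
  -- bounds
  have h1 := (hLbound x (u + z)).2
  have h2 := (hLbound x (u - z)).1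
  have h3 : 0 ≤ l₀ * ((u - z) ⬝ᵥ (u - z)) := mul_nonneg hl₀.le (dot_self_nonneg _)
  have h4 : (u + z) ⬝ᵥ (u + z) = u ⬝ᵥ u + 2 * (u ⬝ᵥ z) + z ⬝ᵥ z := by
    simp only [add_dotProduct, dotProduct_add]
    rw [dotProduct_comm z u]
    ring
  have h5 : 0 ≤ (u - z) ⬝ᵥ (u - z) := dot_self_nonneg _
  have h6 : (u - z) ⬝ᵥ (u - z) = u ⬝ᵥ u - 2 * (u ⬝ᵥ z) + z ⬝ᵥ z := by
    simp only [sub_dotProduct, dotProduct_sub]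
    rw [dotProduct_comm z u]
    ring
  have huu : u ⬝ᵥ u = s * (v ⬝ᵥ v) := by
    rw [hu, smul_dotProduct, dotProduct_smul, smul_eq_mul, smul_eq_mul, ← mul_assoc, ← sq, hc2]
  have hzz : z ⬝ᵥ z = (w ⬝ᵥ w) / s := by
    rw [hz, smul_dotProduct, dotProduct_smul, smul_eq_mul, smul_eq_mul, ← mul_assoc, ← sq,
      inv_pow, hc2]
    ring
  have hquad := hexp u z
  have hquad2 := hexp2
  -- 4 * (Lu)z = B(u+z) - B(u-z) ≤ l₁|u+z|²
  have hkey : 4 * (((L x) *ᵥ u) ⬝ᵥ z) ≤ l₁ * ((u + z) ⬝ᵥ (u + z)) := by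
    nlinarith [h1, h2, h3, hquad, hquad2]
  have hfinal : 4 * (((L x) *ᵥ u) ⬝ᵥ z) ≤ 2 * l₁ * (u ⬝ᵥ u + z ⬝ᵥ z) := by
    have hl₁0 : 0 ≤ l₁ := le_trans hl₀.le hl
    nlinarith [hkey, h4, h5, h6, mul_nonneg hl₁0 h5]
  rw [← huz]
  rw [huu, hzz] at hfinal
  linarith
end Lbounds

-- the optimization lemma
lemma le_geom_mean {a K X Y : ℝ} (hK : 0 ≤ K) (hX : 0 ≤ X) (hY : 0 ≤ Y)
    (h : ∀ s : ℝ, 0 < s → a ≤ K/2 * (s * X + Y / s)) :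
    a ≤ K * Real.sqrt X * Real.sqrt Y := by
  rcases eq_or_lt_of_le hX with hX0 | hX0
  · -- X = 0
    have h0 : a ≤ 0 := by
      apply le_of_forall_gt_imp_ge_of_dense
      intro ε hε
      rcases eq_or_lt_of_le (mul_nonneg hK hY) with hKY | hKY
      · have := h 1 one_pos
        rw [← hX0] at this
        simp only [mul_zero, zero_add, div_one] at this
        calc a ≤ K / 2 * Y := this
        _ = (K * Y) / 2 := by ring
        _ = 0 := by rw [← hKY]; ring
        _ ≤ ε := hε.le
      · set s : ℝ := (K * Y) / (2 * ε) with hs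
        have hε0 : 0 < ε := lt_of_le_of_lt (by positivity) hε
        have hs0 : 0 < s := by positivity
        have := h s hs0
        rw [← hX0] at this
        simp only [mul_zero, zero_add] at this
        calc a ≤ K / 2 * (Y / s) := this
        _ = ε * ((K * Y) / (K * Y)) := by rw [hs]; field_simp
        _ = ε := by rw [div_self (ne_of_gt hKY), mul_one]
    calc a ≤ 0 := h0
    _ ≤ K * Real.sqrt X * Real.sqrt Y := by positivity
  · rcases eq_or_lt_of_le hY with hY0 | hY0
    · -- Y = 0
      have h0 : a ≤ 0 := by
        apply le_of_forall_gt_imp_ge_of_dense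
        intro ε hε
        have hε0 : 0 < ε := lt_of_le_of_lt (le_refl 0) hε
        set s : ℝ := (2 * ε) / (K * X + 1) with hs
        have hKX : 0 < K * X + 1 := by positivity
        have hs0 : 0 < s := by positivity
        have := h s hs0
        rw [← hY0] at this
        simp only [zero_div, add_zero] at this
        calc a ≤ K / 2 * (s * X) := this
        _ = (K * X) * ε / (K * X + 1) := by rw [hs]; field_simp
        _ ≤ ε := by
            rw [div_le_iff₀ hKX]
            nlinarith [mul_nonneg hK hX]
      calc a ≤ 0 := h0
      _ ≤ K * Real.sqrt X * Real.sqrt Y := by positivity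
    · -- X, Y > 0
      set s : ℝ := Real.sqrt Y / Real.sqrt X with hs
      have hsX : 0 < Real.sqrt X := Real.sqrt_pos.mpr hX0
      have hsY : 0 < Real.sqrt Y := Real.sqrt_pos.mpr hY0
      have hs0 : 0 < s := by positivity
      have := h s hs0
      have hsX2 : Real.sqrt X * Real.sqrt X = X := Real.mul_self_sqrt hX
      have hsY2 : Real.sqrt Y * Real.sqrt Y = Y := Real.mul_self_sqrt hY
      have hterm : s * X + Y / s = 2 * (Real.sqrt X * Real.sqrt Y) := by
        rw [hs]
        field_simp
        nlinarith [hsX2, hsY2]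
      rw [hterm] at this
      calc a ≤ K / 2 * (2 * (Real.sqrt X * Real.sqrt Y)) := this
      _ = K * Real.sqrt X * Real.sqrt Y := by ring

theorem stmt_17 (n : ℕ) (hn : n = 2 ∨ n = 3)
    (L : EuclideanSpace ℝ (Fin n) → Matrix (Fin n) (Fin n) ℝ)
    (l₀ l₁ : ℝ) (hl₀ : 0 < l₀) (hl : l₀ ≤ l₁)
    (hLmeas : ∀ i j, Measurable fun x => L x i j)
    (hLsym : ∀ x, (L x)ᵀ = L x)
    (hLbound : ∀ (x : EuclideanSpace ℝ (Fin n)) (ξ : Fin n → ℝ),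
      l₀ * (ξ ⬝ᵥ ξ) ≤ ((L x) *ᵥ ξ) ⬝ᵥ ξ ∧ ((L x) *ᵥ ξ) ⬝ᵥ ξ ≤ l₁ * (ξ ⬝ᵥ ξ)) :
    ∀ ρ : ℝ, 0 < ρ → ∃ C₀ > (0:ℝ), ∃ C₁ > (0:ℝ),
      ∀ (ι : Type) [Fintype ι],
      ∀ r : ι → Fin (n + 1) → EuclideanSpace ℝ (Fin n),
        (∀ T : ι, AffineIndependent ℝ (r T)) →
        -- shape regularity: every element contains a ball of radius comparable to
        -- its diameter
        (∀ T : ι, ∃ (z : EuclideanSpace ℝ (Fin n)) (ρin : ℝ), 0 < ρin ∧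
          Metric.ball z ρin ⊆ convexHull ℝ (Set.range (r T)) ∧
          Metric.diam (convexHull ℝ (Set.range (r T))) ≤ ρ * ρin) →
        -- the elements have pairwise disjoint interiors
        (Pairwise fun T T' : ι =>
          Disjoint (interior (convexHull ℝ (Set.range (r T))))
            (interior (convexHull ℝ (Set.range (r T'))))) →
        -- φ, ψ elementwise linear (affine) vector fields
        ∀ φ ψ : ι → (EuclideanSpace ℝ (Fin n) →ᵃ[ℝ] (Fin n → ℝ)),
          C₀ * (∑ T : ι, ∫ x in convexHull ℝ (Set.range (r T)), (φ T x) ⬝ᵥ (φ T x))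
            ≤ (∑ T : ι, ((volume (convexHull ℝ (Set.range (r T)))).toReal / (n + 1)) *
                 ∑ i, ((L (r T i)) *ᵥ (φ T (r T i))) ⬝ᵥ (φ T (r T i))) ∧
          (∑ T : ι, ((volume (convexHull ℝ (Set.range (r T)))).toReal / (n + 1)) *
               ∑ i, ((L (r T i)) *ᵥ (φ T (r T i))) ⬝ᵥ (ψ T (r T i)))
            ≤ C₁ * Real.sqrt (∑ T : ι, ∫ x in convexHull ℝ (Set.range (r T)),
                  (φ T x) ⬝ᵥ (φ T x))
                * Real.sqrt (∑ T : ι, ∫ x in convexHull ℝ (Set.range (r T)),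
                  (ψ T x) ⬝ᵥ (ψ T x)) := by
  intro ρ hρ
  have hn0 : 0 < n := by rcases hn with h | h <;> omega
  obtain ⟨c₂, hc₂, htrans⟩ := transfer hn0
  have hl₁ : 0 < l₁ := lt_of_lt_of_le hl₀ hl
  have hnr : (0:ℝ) < (n:ℝ) + 1 := by positivity
  refine ⟨l₀ / ((n:ℝ) + 1), by positivity, l₁ * c₂ / ((n:ℝ) + 1), by positivity, ?_⟩
  intro ι _ r hr _hshape _hdisj φ ψ
  set Tset : ι → Set (EuclideanSpace ℝ (Fin n)) := fun T => convexHull ℝ (Set.range (r T))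
    with hTset
  have hTmeas : ∀ T, MeasurableSet (Tset T) := fun T =>
    ((Set.finite_range (r T)).isCompact_convexHull ℝ).isClosed.measurableSet
  have hvol0 : ∀ T, 0 ≤ (volume (Tset T)).toReal := fun T => ENNReal.toReal_nonneg
  have hintnn : ∀ (χ : ι → (EuclideanSpace ℝ (Fin n) →ᵃ[ℝ] (Fin n → ℝ))) (T : ι),
      0 ≤ ∫ x in Tset T, (χ T x) ⬝ᵥ (χ T x) := fun χ T =>
    setIntegral_nonneg (hTmeas T) fun x _ => dot_self_nonneg _
  have hX0 : 0 ≤ ∑ T : ι, ∫ x in Tset T, (φ T x) ⬝ᵥ (φ T x) :=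
    Finset.sum_nonneg fun T _ => hintnn φ T
  have hY0 : 0 ≤ ∑ T : ι, ∫ x in Tset T, (ψ T x) ⬝ᵥ (ψ T x) :=
    Finset.sum_nonneg fun T _ => hintnn ψ T
  constructor
  · -- coercivity
    rw [Finset.mul_sum]
    apply Finset.sum_le_sum
    intro T _
    have hup := element_upper (r T) (φ T)
    have hLB : ∀ i, l₀ * (φ T (r T i) ⬝ᵥ φ T (r T i))
        ≤ (L (r T i) *ᵥ φ T (r T i)) ⬝ᵥ φ T (r T i) := fun i => (hLbound _ _).1
    calc l₀ / ((n:ℝ) + 1) * ∫ x in Tset T, (φ T x) ⬝ᵥ (φ T x)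
        ≤ l₀ / ((n:ℝ) + 1) *
            ((volume (Tset T)).toReal * ∑ i, (φ T (r T i)) ⬝ᵥ (φ T (r T i))) := by
          apply mul_le_mul_of_nonneg_left hup (by positivity)
    _ = (volume (Tset T)).toReal / ((n:ℝ) + 1) *
            ∑ i, l₀ * ((φ T (r T i)) ⬝ᵥ (φ T (r T i))) := by
          rw [← Finset.mul_sum]
          ring
    _ ≤ (volume (Tset T)).toReal / ((n:ℝ) + 1) *
            ∑ i, (L (r T i) *ᵥ φ T (r T i)) ⬝ᵥ φ T (r T i) := by
          apply mul_le_mul_of_nonneg_left (Finset.sum_le_sum fun i _ => hLB i)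
          positivity
  · -- continuity
    apply le_geom_mean (by positivity) hX0 hY0
    intro s hs
    have hQφ : ∑ T : ι, (volume (Tset T)).toReal / ((n:ℝ) + 1) *
          ∑ i, (φ T (r T i)) ⬝ᵥ (φ T (r T i))
        ≤ c₂ / ((n:ℝ) + 1) * ∑ T : ι, ∫ x in Tset T, (φ T x) ⬝ᵥ (φ T x) := by
      rw [Finset.mul_sum]
      apply Finset.sum_le_sum
      intro T _
      have := htrans (r T) (hr T) (φ T)
      calc (volume (Tset T)).toReal / ((n:ℝ) + 1) * ∑ i, (φ T (r T i)) ⬝ᵥ (φ T (r T i))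
          = ((volume (Tset T)).toReal * ∑ i, (φ T (r T i)) ⬝ᵥ (φ T (r T i))) / ((n:ℝ) + 1) := by
            ring
      _ ≤ (c₂ * ∫ x in Tset T, (φ T x) ⬝ᵥ (φ T x)) / ((n:ℝ) + 1) := by
            gcongr
      _ = c₂ / ((n:ℝ) + 1) * ∫ x in Tset T, (φ T x) ⬝ᵥ (φ T x) := by ring
    have hQψ : ∑ T : ι, (volume (Tset T)).toReal / ((n:ℝ) + 1) *
          ∑ i, (ψ T (r T i)) ⬝ᵥ (ψ T (r T i))
        ≤ c₂ / ((n:ℝ) + 1) * ∑ T : ι, ∫ x in Tset T, (ψ T x) ⬝ᵥ (ψ T x) := by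
      rw [Finset.mul_sum]
      apply Finset.sum_le_sum
      intro T _
      have := htrans (r T) (hr T) (ψ T)
      calc (volume (Tset T)).toReal / ((n:ℝ) + 1) * ∑ i, (ψ T (r T i)) ⬝ᵥ (ψ T (r T i))
          = ((volume (Tset T)).toReal * ∑ i, (ψ T (r T i)) ⬝ᵥ (ψ T (r T i))) / ((n:ℝ) + 1) := by
            ring
      _ ≤ (c₂ * ∫ x in Tset T, (ψ T x) ⬝ᵥ (ψ T x)) / ((n:ℝ) + 1) := by
            gcongr
      _ = c₂ / ((n:ℝ) + 1) * ∫ x in Tset T, (ψ T x) ⬝ᵥ (ψ T x) := by ring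
    calc ∑ T : ι, (volume (Tset T)).toReal / ((n:ℝ) + 1) *
            ∑ i, ((L (r T i)) *ᵥ (φ T (r T i))) ⬝ᵥ (ψ T (r T i))
        ≤ ∑ T : ι, (volume (Tset T)).toReal / ((n:ℝ) + 1) *
            ∑ i, (l₁/2) * (s * ((φ T (r T i)) ⬝ᵥ (φ T (r T i)))
              + ((ψ T (r T i)) ⬝ᵥ (ψ T (r T i))) / s) := by
          apply Finset.sum_le_sum
          intro T _
          apply mul_le_mul_of_nonneg_left _ (by positivity)
          exact Finset.sum_le_sum fun i _ =>
            Ldot_le hl₀ hl hLsym hLbound (r T i) (φ T (r T i)) (ψ T (r T i)) hs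
    _ = (l₁ * s / 2) * (∑ T : ι, (volume (Tset T)).toReal / ((n:ℝ) + 1) *
            ∑ i, (φ T (r T i)) ⬝ᵥ (φ T (r T i)))
          + (l₁ / (2 * s)) * (∑ T : ι, (volume (Tset T)).toReal / ((n:ℝ) + 1) *
            ∑ i, (ψ T (r T i)) ⬝ᵥ (ψ T (r T i))) := by
          rw [Finset.mul_sum, Finset.mul_sum, ← Finset.sum_add_distrib]
          apply Finset.sum_congr rfl
          intro T _
          have hinner : ∑ i, (l₁/2) * (s * ((φ T (r T i)) ⬝ᵥ (φ T (r T i)))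
              + ((ψ T (r T i)) ⬝ᵥ (ψ T (r T i))) / s)
            = (l₁ * s / 2) * (∑ i, (φ T (r T i)) ⬝ᵥ (φ T (r T i)))
              + (l₁ / (2 * s)) * (∑ i, (ψ T (r T i)) ⬝ᵥ (ψ T (r T i))) := by
            rw [Finset.mul_sum, Finset.mul_sum, ← Finset.sum_add_distrib]
            apply Finset.sum_congr rfl
            intro i _
            field_simp
          rw [hinner]
          ring
    _ ≤ (l₁ * s / 2) * (c₂ / ((n:ℝ) + 1) * ∑ T : ι, ∫ x in Tset T, (φ T x) ⬝ᵥ (φ T x))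
          + (l₁ / (2 * s)) * (c₂ / ((n:ℝ) + 1) * ∑ T : ι, ∫ x in Tset T, (ψ T x) ⬝ᵥ (ψ T x)) := by
          apply add_le_add
          · exact mul_le_mul_of_nonneg_left hQφ (by positivity)
          · exact mul_le_mul_of_nonneg_left hQψ (by positivity)
    _ = (l₁ * c₂ / ((n:ℝ) + 1)) / 2 * (s * (∑ T : ι, ∫ x in Tset T, (φ T x) ⬝ᵥ (φ T x))
          + (∑ T : ι, ∫ x in Tset T, (ψ T x) ⬝ᵥ (ψ T x)) / s) := by
          field_simp
end
end
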